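/- arXiv:1404.4914 — 6 statements merged into one kernel-verified Lean document; each statement's English description precedes it below -/
import Mathlib

section
/- With the data of the construction of M(a,α,p,q), assume α ≠ 0. Then the holomorphic vector field H^{a,α}(z₁,z₂) = ((e^{αz₁} − 1)/α)·a(z₂)·∂/∂z₁ + iz₂·∂/∂z₂ is tangent to M(a,α,p,q), i.e. Re[ ((e^{αz₁} − 1)/α)·a(z₂)·ρ_{z₁}(z₁,z₂) + iz₂·ρ_{z₂}(z₁,z₂) ] = 0 for all (z₁,z₂) ∈ M(a,α,p,q), where ρ_{z₁} = 1/2 + f_t(z₂, Im z₁)/(2i) and ρ_{z₂} = P_{z₂}(z₂) + f_{z₂}(z₂, Im z₁). -/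
open Complex Metric Set
set_option maxHeartbeats 1000000

/-- The Wirtinger derivative `u_z = (∂u/∂x − i ∂u/∂y)/2` of `u` at `z`. -/
noncomputable def wirt (u : ℂ → ℂ) (z : ℂ) : ℂ :=
  (fderiv ℝ u z 1 - Complex.I * fderiv ℝ u z Complex.I) / 2

/-- The holomorphic function `a(z) = Σ_{n≥1} aₙ zⁿ` (with `a 0 = 0`). -/
noncomputable def Afn (a : ℕ → ℂ) (z : ℂ) : ℂ := ∑' n : ℕ, a n * z ^ n

/-- The primitive-type series `Σ_{n≥1} (aₙ/n) zⁿ`. -/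
noncomputable def Sfn (a : ℕ → ℂ) (z : ℂ) : ℂ := ∑' n : ℕ, a n / (n : ℂ) * z ^ n

/-- The series `Σ_{n≥1} (aₙ/(i n)) zⁿ`. -/
noncomputable def Tfn (a : ℕ → ℂ) (z : ℂ) : ℂ :=
  ∑' n : ℕ, a n / (Complex.I * (n : ℂ)) * z ^ n

/-- `R(z₂) = q(|z₂|) − Re (Σ_{n≥1} (aₙ/n) z₂ⁿ)`. -/
noncomputable def Rfn (a : ℕ → ℂ) (q : ℝ → ℝ) (z : ℂ) : ℝ :=
  q ‖z‖ - (Sfn a z).re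

/-- `Q₀(z₂) = tan (R(z₂))`. -/
noncomputable def Q0fn (a : ℕ → ℂ) (q : ℝ → ℝ) (z : ℂ) : ℝ := Real.tan (Rfn a q z)

/-- `P₁(z₂) = exp[p(|z₂|) + Re (Σ (aₙ/(i n)) z₂ⁿ) − log |cos (R(z₂))|]` for `z₂ ≠ 0`,
`P₁(0) = 0`. -/
noncomputable def P1fn (a : ℕ → ℂ) (q p : ℝ → ℝ) (z : ℂ) : ℝ :=
  if z = 0 then 0
  else Real.exp (p ‖z‖ + (Tfn a z).re - Real.log |Real.cos (Rfn a q z)|)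

/-- `f(z₂,t) = −(1/α) log |cos(R(z₂)+αt)/cos(R(z₂))|` if `α ≠ 0`, `tan(R(z₂))·t` if `α = 0`. -/
noncomputable def ffn (α : ℝ) (a : ℕ → ℂ) (q : ℝ → ℝ) (z : ℂ) (t : ℝ) : ℝ :=
  if α = 0 then Real.tan (Rfn a q z) * t
  else -(1 / α) * Real.log |Real.cos (Rfn a q z + α * t) / Real.cos (Rfn a q z)|

/-- `P = (1/α) log(1 + α P₁)` if `α ≠ 0`, `P = P₁` if `α = 0`. -/
noncomputable def Pfn (α : ℝ) (a : ℕ → ℂ) (q p : ℝ → ℝ) (z : ℂ) : ℝ :=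
  if α = 0 then P1fn a q p z else (1 / α) * Real.log (1 + α * P1fn a q p z)

/-- `L^α(z₁) = (e^{αz₁} − 1)/α` if `α ≠ 0`, `L⁰(z₁) = z₁`. -/
noncomputable def Lfn (α : ℝ) (z : ℂ) : ℂ :=
  if α = 0 then z else (Complex.exp ((α : ℂ) * z) - 1) / (α : ℂ)


lemma hd_re {f : ℝ → ℂ} {f' : ℂ} {x : ℝ} (h : HasDerivAt f f' x) :
    HasDerivAt (fun y => (f y).re) f'.re x :=
  (Complex.reCLM.hasFDerivAt.comp_hasDerivAt x h)

lemma hd_exp_path (θ : ℝ) :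
    HasDerivAt (fun θ : ℝ => Complex.exp (Complex.I * θ))
      (Complex.I * Complex.exp (Complex.I * θ)) θ := by
  have h1 : HasDerivAt (fun z : ℂ => Complex.exp (Complex.I * z))
      (Complex.exp (Complex.I * θ) * Complex.I) (θ : ℂ) := by
    have h := ((hasDerivAt_id (θ : ℂ)).const_mul Complex.I).cexp
    simpa using h
  simpa [mul_comm] using h1.comp_ofReal

lemma tsum_path_hasDerivAt (c : ℕ → ℂ) (b : ℕ → ℝ) (w : ℂ)
    (hb : ∀ n : ℕ, (n : ℝ) * ‖c n‖ * ‖w‖ ^ n ≤ b n) (hbs : Summable b)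
    (h0 : Summable fun n => ‖c n‖ * ‖w‖ ^ n) :
    HasDerivAt (fun θ : ℝ => (∑' n : ℕ, c n * (Complex.exp (Complex.I * θ) * w) ^ n).re)
      ((∑' n : ℕ, Complex.I * n * c n * w ^ n).re) 0 := by
  set g : ℕ → ℝ → ℝ := fun n θ => (c n * (Complex.exp (Complex.I * θ) * w) ^ n).re with hg_def
  set g' : ℕ → ℝ → ℝ :=
    fun n θ => (Complex.I * n * c n * (Complex.exp (Complex.I * θ) * w) ^ n).re with hg'_def
  have habs : ∀ (θ : ℝ) (n : ℕ),
      ‖c n * (Complex.exp (Complex.I * θ) * w) ^ n‖ = ‖c n‖ * ‖w‖ ^ n := by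
    intro θ n
    simp [norm_mul, norm_pow, Complex.norm_exp]
  have hsummθ : ∀ θ : ℝ, Summable fun n => c n * (Complex.exp (Complex.I * θ) * w) ^ n := by
    intro θ
    apply Summable.of_norm
    simpa only [habs θ] using h0
  have hgd : ∀ (n : ℕ) (θ : ℝ), HasDerivAt (g n) (g' n θ) θ := by
    intro n θ
    have hpow : HasDerivAt (fun θ : ℝ => (Complex.exp (Complex.I * θ) * w) ^ n)
        (Complex.I * n * (Complex.exp (Complex.I * θ) * w) ^ n) θ := by
      have hC : HasDerivAt (fun z : ℂ => (Complex.exp (Complex.I * z) * w) ^ n)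
          (Complex.I * n * (Complex.exp (Complex.I * (θ : ℂ)) * w) ^ n) (θ : ℂ) := by
        have hexpC : HasDerivAt (fun z : ℂ => Complex.exp (Complex.I * z) * w)
            (Complex.I * Complex.exp (Complex.I * (θ : ℂ)) * w) (θ : ℂ) := by
          have h1 := (Complex.hasDerivAt_exp (Complex.I * θ)).comp (θ : ℂ)
            ((hasDerivAt_id (θ : ℂ)).const_mul Complex.I)
          simpa [mul_comm, Function.comp] using h1.mul_const w
        have := hexpC.fun_pow n
        refine this.congr_deriv ?_
        rcases n with _ | m
        · simp
        · simp only [Nat.add_sub_cancel]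
          rw [pow_succ]
          push_cast
          ring
      exact hC.comp_ofReal
    have hmain := (hpow.const_mul (c n))
    have : Complex.I * ↑n * c n * (Complex.exp (Complex.I * ↑θ) * w) ^ n
        = c n * (Complex.I * ↑n * (Complex.exp (Complex.I * ↑θ) * w) ^ n) := by ring
    rw [hg'_def]
    simp only []
    rw [this]
    exact hd_re hmain
  have hg'b : ∀ (n : ℕ) (θ : ℝ), ‖g' n θ‖ ≤ b n := by
    intro n θ
    refine le_trans ?_ (hb n)
    refine le_trans (Complex.abs_re_le_norm _) (le_of_eq ?_)
    simp [norm_mul, norm_pow, Complex.norm_exp]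
  have hs2 : Summable fun n : ℕ => Complex.I * n * c n * w ^ n := by
    refine Summable.of_norm_bounded hbs fun n => ?_
    refine le_trans (le_of_eq ?_) (hb n)
    simp [norm_mul, norm_pow]
  have hsum0 : Summable fun n => g n 0 := by
    refine Summable.of_norm_bounded h0 fun n => ?_
    refine le_trans (Complex.abs_re_le_norm _) (le_of_eq ?_)
    exact habs 0 n
  have H := hasDerivAt_tsum hbs hgd hg'b hsum0 0
  have hfun : (fun θ : ℝ => (∑' n : ℕ, c n * (Complex.exp (Complex.I * θ) * w) ^ n).re)
      = fun θ => ∑' n, g n θ := funext fun θ => Complex.re_tsum (hsummθ θ)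
  have hval : (∑' n, g' n 0) = (∑' n : ℕ, Complex.I * n * c n * w ^ n).re := by
    rw [Complex.re_tsum hs2]
    apply tsum_congr; intro n
    simp [hg'_def]
  rw [hfun, ← hval]
  exact H


lemma abs_summable (ε₀ : ℝ) (a : ℕ → ℂ)
    (hsum : ∀ z ∈ ball (0:ℂ) ε₀, Summable fun n : ℕ => a n * z ^ n)
    (z : ℂ) (hz : z ∈ ball (0:ℂ) ε₀) : Summable fun n => ‖a n‖ * ‖z‖ ^ n := by
  have hzlt : ‖z‖ < ε₀ := by simpa [mem_ball, dist_zero_right] using hz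
  obtain ⟨r, hr1, hr2⟩ := exists_between hzlt
  have hr0 : 0 < r := lt_of_le_of_lt (norm_nonneg z) hr1
  have hrball : ((r : ℂ)) ∈ ball (0:ℂ) ε₀ := by
    simp [mem_ball, dist_zero_right, abs_of_pos hr0, hr2, Complex.norm_real, Real.norm_eq_abs]
  have hs := hsum r hrball
  have htend := hs.tendsto_atTop_zero.norm
  have hbdd : BddAbove (Set.range fun n => ‖a n * (r:ℂ) ^ n‖) := htend.bddAbove_range
  obtain ⟨C, hC⟩ := hbdd
  have hCle : ∀ n, ‖a n‖ * r ^ n ≤ C := by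
    intro n
    have := hC (Set.mem_range_self (f := fun n => ‖a n * (r:ℂ) ^ n‖) n)
    simpa [norm_mul, norm_pow, Complex.norm_real, Real.norm_eq_abs, abs_of_pos hr0] using this
  have hgeo : Summable fun n : ℕ => C * (‖z‖ / r) ^ n := by
    refine (summable_geometric_of_lt_one (by positivity) ?_).mul_left C
    rw [div_lt_one hr0]; exact hr1
  refine Summable.of_nonneg_of_le (fun n => by positivity) (fun n => ?_) hgeo
  have : ‖a n‖ * ‖z‖ ^ n = (‖a n‖ * r ^ n) * (‖z‖ / r) ^ n := by
    rw [div_pow]; field_simp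
  rw [this]
  exact mul_le_mul_of_nonneg_right (hCle n) (by positivity)

lemma wirt_real (v : ℂ → ℝ) (z : ℂ) (hv : DifferentiableAt ℝ v z) :
    (Complex.I * z * wirt (fun w => ((v w : ℝ) : ℂ)) z).re
      = (fderiv ℝ v z) (Complex.I * z) / 2 := by
  have hf : fderiv ℝ (fun w => ((v w : ℝ) : ℂ)) z
      = Complex.ofRealCLM.comp (fderiv ℝ v z) :=
    (Complex.ofRealCLM.hasFDerivAt.comp z hv.hasFDerivAt).fderiv
  set D := fderiv ℝ v z with hD
  have h1 : D (Complex.I * z) = (-z.im) * D 1 + z.re * D Complex.I := by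
    have h2 : Complex.I * z = (-z.im : ℝ) • (1:ℂ) + (z.re : ℝ) • Complex.I := by
      simp [Complex.real_smul]
      apply Complex.ext <;> simp
    rw [h2, map_add, map_smul, map_smul]
    simp [smul_eq_mul]
  rw [wirt, hf, h1]
  simp only [ContinuousLinearMap.coe_comp', Function.comp_apply, Complex.ofRealCLM_apply]
  set d1 := D 1
  set d2 := D Complex.I
  have : ((d1:ℂ) - Complex.I * (d2:ℂ)) / 2 = (((d1/2 : ℝ)):ℂ) + ((-d2/2 : ℝ):ℂ) * Complex.I := by
    push_cast; ring
  rw [this]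
  simp [Complex.mul_re, Complex.mul_im, Complex.add_re, Complex.add_im]
  ring

lemma S_path (a : ℕ → ℂ) (ha0 : a 0 = 0) (w : ℂ)
    (hnorm : Summable fun n => ‖a n‖ * ‖w‖ ^ n) :
    HasDerivAt (fun θ : ℝ => (Sfn a (Complex.exp (Complex.I * θ) * w)).re)
      (-(Afn a w).im) 0 := by
  have hble : ∀ n : ℕ, ‖a n / (n : ℂ)‖ * ‖w‖ ^ n ≤ ‖a n‖ * ‖w‖ ^ n := by
    intro n
    gcongr
    rcases Nat.eq_zero_or_pos n with h | h
    · simp [h, ha0]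
    · rw [norm_div]
      calc ‖a n‖ / ‖(n : ℂ)‖ ≤ ‖a n‖ / 1 := by
            gcongr
            · simp [Complex.norm_natCast]; exact_mod_cast h
          _ = ‖a n‖ := div_one _
  have hb : ∀ n : ℕ, (n : ℝ) * ‖a n / (n : ℂ)‖ * ‖w‖ ^ n ≤ ‖a n‖ * ‖w‖ ^ n := by
    intro n
    rcases Nat.eq_zero_or_pos n with h | h
    · simp [h, ha0]
    · have : (n : ℝ) * ‖a n / (n : ℂ)‖ = ‖a n‖ := by
        rw [norm_div, Complex.norm_natCast]
        field_simp
      rw [this]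
  have h0 : Summable fun n => ‖a n / (n : ℂ)‖ * ‖w‖ ^ n :=
    Summable.of_nonneg_of_le (fun n => by positivity) hble hnorm
  have H := tsum_path_hasDerivAt (fun n => a n / (n : ℂ)) _ w hb hnorm h0
  have hval : (∑' n : ℕ, Complex.I * n * (a n / (n : ℂ)) * w ^ n) = Complex.I * Afn a w := by
    rw [Afn, ← tsum_mul_left]
    apply tsum_congr
    intro n
    rcases Nat.eq_zero_or_pos n with h | h
    · simp [h, ha0]
    · have hn : (n : ℂ) ≠ 0 := Nat.cast_ne_zero.mpr h.ne'
      field_simp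
  simp only [Sfn]
  convert H using 2
  rw [hval]
  simp [Complex.mul_re]

lemma T_path (a : ℕ → ℂ) (ha0 : a 0 = 0) (w : ℂ)
    (hnorm : Summable fun n => ‖a n‖ * ‖w‖ ^ n) :
    HasDerivAt (fun θ : ℝ => (Tfn a (Complex.exp (Complex.I * θ) * w)).re)
      ((Afn a w).re) 0 := by
  have hnormI : ∀ n : ℕ, ‖a n / (Complex.I * (n : ℂ))‖ = ‖a n‖ / n := by
    intro n
    rw [norm_div, norm_mul, Complex.norm_I, one_mul, Complex.norm_natCast]
  have hble : ∀ n : ℕ, ‖a n / (Complex.I * (n : ℂ))‖ * ‖w‖ ^ n ≤ ‖a n‖ * ‖w‖ ^ n := by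
    intro n
    gcongr
    rw [hnormI]
    rcases Nat.eq_zero_or_pos n with h | h
    · simp [h, ha0]
    · calc ‖a n‖ / (n : ℝ) ≤ ‖a n‖ / 1 := by
            gcongr; exact_mod_cast h
          _ = ‖a n‖ := div_one _
  have hb : ∀ n : ℕ, (n : ℝ) * ‖a n / (Complex.I * (n : ℂ))‖ * ‖w‖ ^ n ≤ ‖a n‖ * ‖w‖ ^ n := by
    intro n
    rcases Nat.eq_zero_or_pos n with h | h
    · simp [h, ha0]
    · have : (n : ℝ) * ‖a n / (Complex.I * (n : ℂ))‖ = ‖a n‖ := by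
        rw [hnormI]
        field_simp
      rw [this]
  have h0 : Summable fun n => ‖a n / (Complex.I * (n : ℂ))‖ * ‖w‖ ^ n :=
    Summable.of_nonneg_of_le (fun n => by positivity) hble hnorm
  have H := tsum_path_hasDerivAt (fun n => a n / (Complex.I * (n : ℂ))) _ w hb hnorm h0
  have hval : (∑' n : ℕ, Complex.I * n * (a n / (Complex.I * (n : ℂ))) * w ^ n) = Afn a w := by
    rw [Afn]
    apply tsum_congr
    intro n
    rcases Nat.eq_zero_or_pos n with h | h
    · simp [h, ha0]
    · have hn : (n : ℂ) ≠ 0 := Nat.cast_ne_zero.mpr h.ne'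
      field_simp
  simp only [Tfn]
  convert H using 2
  rw [hval]



lemma re_half_tau (w : ℂ) (r s : ℝ) (hs : s ≠ 0) :
    ((w/(s:ℂ)) * ((1/2:ℂ) + (r:ℂ)/(2*Complex.I))).re = (w.re + r*w.im)/(2*s) := by
  have hs' : (s:ℂ) ≠ 0 := Complex.ofReal_ne_zero.mpr hs
  have h1 : (w/(s:ℂ)) * ((1/2:ℂ) + (r:ℂ)/(2*Complex.I))
      = w * (1 - (r:ℂ)*Complex.I) * (((2*s)⁻¹:ℝ):ℂ) := by
    have h2I : (2*Complex.I : ℂ) ≠ 0 := by simp [Complex.I_ne_zero]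
    rw [Complex.ofReal_inv, Complex.ofReal_mul]
    field_simp
    ring_nf
    rw [Complex.I_sq]
    push_cast
    ring
  rw [h1]
  simp [Complex.mul_re, Complex.mul_im]
  field_simp

/-- For `α ≠ 0`, the holomorphic vector field
`H^{a,α} = ((e^{αz₁} − 1)/α) a(z₂) ∂/∂z₁ + i z₂ ∂/∂z₂` is tangent to `M(a,α,p,q)`:
`Re[ ((e^{αz₁} − 1)/α) a(z₂) ρ_{z₁} + i z₂ ρ_{z₂} ] = 0` on `M(a,α,p,q)`, where
`ρ_{z₁} = 1/2 + f_t(z₂, Im z₁)/(2i)` and `ρ_{z₂} = P_{z₂}(z₂) + f_{z₂}(z₂, Im z₁)`. -/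
theorem stmt6
    (ε₀ : ℝ) (hε₀ : 0 < ε₀) (α : ℝ) (hα : α ≠ 0)
    (a : ℕ → ℂ) (ha0 : a 0 = 0) (hane : ∃ n, a n ≠ 0)
    (hsum : ∀ z ∈ ball (0:ℂ) ε₀, Summable fun n : ℕ => a n * z ^ n)
    (q : ℝ → ℝ) (hq0 : q 0 = 0)
    (hR : ContDiffOn ℝ 1 (Rfn a q) (ball 0 ε₀))
    (hRle : ∀ z ∈ ball (0:ℂ) ε₀, |Rfn a q z| ≤ 1)
    (p : ℝ → ℝ)
    (hP₁ : ContDiffOn ℝ 1 (P1fn a q p) (ball 0 ε₀))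
    (hpos : ∀ z ∈ ball (0:ℂ) ε₀, 0 < 1 + α * P1fn a q p z) :
    ∀ z₁ z₂ : ℂ, z₁ ∈ ball (0:ℂ) (1 / (2 * |α|)) → z₂ ∈ ball (0:ℂ) ε₀ →
      z₁.re + Pfn α a q p z₂ + ffn α a q z₂ z₁.im = 0 →
      (((Complex.exp ((α : ℂ) * z₁) - 1) / (α : ℂ)) * Afn a z₂ *
          ((1 / 2 : ℂ) + ((deriv (fun s : ℝ => ffn α a q z₂ s) z₁.im : ℝ) : ℂ) /
            (2 * Complex.I)) +
        Complex.I * z₂ * (wirt (fun w => ((Pfn α a q p w : ℝ) : ℂ)) z₂ +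
          wirt (fun w => ((ffn α a q w z₁.im : ℝ) : ℂ)) z₂)).re = 0 := by
  intro z₁ z₂ hz₁ hz₂ hρ
  by_cases hz20 : z₂ = 0
  · subst hz20
    have hA0 : Afn a 0 = 0 := by
      rw [Afn]
      have h : ∀ n : ℕ, a n * (0:ℂ) ^ n = 0 := by
        intro n; rcases n with _ | m <;> simp [ha0]
      simp [h]
    simp [hA0]
  · set t := z₁.im with ht_def
    have hnorm := abs_summable ε₀ a hsum z₂ hz₂
    set A := Afn a z₂ with hA_def
    set R := Rfn a q z₂ with hRdef
    set P1 := P1fn a q p z₂ with hP1def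
    have hC : 0 < 1 + α * P1 := hpos z₂ hz₂
    set C := 1 + α * P1 with hCdef
    have hC' : C ≠ 0 := ne_of_gt hC
    have hRz : |R| ≤ 1 := hRle z₂ hz₂
    have hαpos : 0 < |α| := abs_pos.mpr hα
    have htle : |t| < 1 / (2 * |α|) := by
      have h1 : |t| ≤ ‖z₁‖ := Complex.abs_im_le_norm z₁
      have h2 : ‖z₁‖ < 1 / (2 * |α|) := by
        simpa [mem_ball, dist_zero_right] using hz₁
      linarith
    have hαt : |α * t| < 1/2 := by
      rw [abs_mul]
      calc |α| * |t| < |α| * (1 / (2 * |α|)) := by gcongr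
        _ = 1/2 := by field_simp
    have hcos : ∀ x : ℝ, |x| < 1.57 → 0 < Real.cos x := by
      intro x hx
      have hpi := Real.pi_gt_d6
      have hx' := abs_lt.mp hx
      apply Real.cos_pos_of_mem_Ioo
      constructor <;> [linarith [hx'.1]; linarith [hx'.2]]
    set T1 := R + α * t with hT1def
    have hT1 : |T1| < 1.57 := by
      calc |T1| ≤ |R| + |α * t| := abs_add_le _ _
        _ < 1.57 := by linarith
    have hc1 : 0 < Real.cos T1 := hcos _ hT1
    have hcR : 0 < Real.cos R := hcos _ (lt_of_le_of_lt hRz (by norm_num))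
    have hc1ne : Real.cos T1 ≠ 0 := ne_of_gt hc1
    have hcRne : Real.cos R ≠ 0 := ne_of_gt hcR
    -- the circular path
    set e : ℝ → ℂ := fun θ => Complex.exp (Complex.I * θ) * z₂ with he_def
    have he0 : e 0 = z₂ := by simp [he_def]
    have habse : ∀ θ, ‖e θ‖ = ‖z₂‖ := by
      intro θ; simp [he_def, Complex.norm_exp]
    have heball : ∀ θ, e θ ∈ ball (0:ℂ) ε₀ := by
      intro θ
      have h1 : ‖z₂‖ < ε₀ := by simpa [mem_ball, dist_zero_right] using hz₂
      simp only [mem_ball, dist_zero_right, habse θ]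
      exact h1
    have hene : ∀ θ, e θ ≠ 0 := fun θ => mul_ne_zero (Complex.exp_ne_zero _) hz20
    have hepath : HasDerivAt e (Complex.I * z₂) 0 := by
      have h := (hd_exp_path 0).mul_const z₂
      simp only [Complex.ofReal_zero, mul_zero, Complex.exp_zero, mul_one] at h
      exact h
    -- R along the path
    have hRpath : ∀ θ, Rfn a q (e θ) = q ‖z₂‖ - (Sfn a (e θ)).re := by
      intro θ; rw [Rfn, habse]
    have hGR : HasDerivAt (fun θ => Rfn a q (e θ)) A.im 0 := by
      have h1 := (S_path a ha0 z₂ hnorm).const_sub (q ‖z₂‖)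
      have h2 : (fun θ : ℝ => Rfn a q (e θ))
          = fun θ : ℝ => q ‖z₂‖ - (Sfn a (Complex.exp (Complex.I * θ) * z₂)).re :=
        funext fun θ => hRpath θ
      rw [h2]
      simpa using h1
    have hGT : HasDerivAt (fun θ => (Tfn a (e θ)).re) A.re 0 := T_path a ha0 z₂ hnorm
    have hRe0 : Rfn a q (e 0) = R := by rw [he0]
    -- P1 along the path
    have hP1path : ∀ θ, P1fn a q p (e θ)
        = Real.exp (p ‖z₂‖ + (Tfn a (e θ)).re
            - Real.log (Real.cos (Rfn a q (e θ)))) := by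
      intro θ
      rw [P1fn, if_neg (hene θ), habse θ, Real.log_abs]
    have hGP1 : HasDerivAt (fun θ => P1fn a q p (e θ))
        (P1 * (A.re + Real.tan R * A.im)) 0 := by
      have hcosGR : HasDerivAt (fun θ => Real.cos (Rfn a q (e θ))) (-Real.sin R * A.im) 0 := by
        have h := hGR.cos
        rwa [hRe0] at h
      have hlog : HasDerivAt (fun θ => Real.log (Real.cos (Rfn a q (e θ))))
          (-Real.sin R * A.im / Real.cos R) 0 := by
        have h := hcosGR.log (by rw [hRe0]; exact hcRne)
        rwa [hRe0] at h
      have hinner : HasDerivAt (fun θ => p ‖z₂‖ + (Tfn a (e θ)).re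
          - Real.log (Real.cos (Rfn a q (e θ))))
          (A.re - -Real.sin R * A.im / Real.cos R) 0 := (hGT.const_add _).sub hlog
      have hexp := hinner.exp
      have heqfn : (fun θ => Real.exp (p ‖z₂‖ + (Tfn a (e θ)).re
          - Real.log (Real.cos (Rfn a q (e θ))))) = fun θ => P1fn a q p (e θ) :=
        funext fun θ => (hP1path θ).symm
      rw [heqfn] at hexp
      have hv : Real.exp (p ‖z₂‖ + (Tfn a (e 0)).re
          - Real.log (Real.cos (Rfn a q (e 0)))) = P1 := by
        rw [← hP1path 0, he0]
      convert hexp using 1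
      rw [hv, Real.tan_eq_sin_div_cos]
      field_simp
      ring
    -- P along the path
    have hPpath : ∀ θ, Pfn α a q p (e θ) = (1/α) * Real.log (1 + α * P1fn a q p (e θ)) :=
      fun θ => by rw [Pfn, if_neg hα]
    have hGP : HasDerivAt (fun θ => Pfn α a q p (e θ))
        (P1 * (A.re + Real.tan R * A.im) / C) 0 := by
      have h1 := ((hGP1.const_mul α).const_add 1).log (by rw [he0]; exact hC')
      have h2 := h1.const_mul (1/α)
      have heq : (fun θ => (1/α) * Real.log (1 + α * P1fn a q p (e θ)))
          = fun θ => Pfn α a q p (e θ) := funext fun θ => (hPpath θ).symm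
      rw [heq] at h2
      refine h2.congr_deriv ?_
      rw [he0, ← hP1def, ← hCdef]
      field_simp
    -- differentiability of P in z and value of the angular derivative
    have hP1diff : DifferentiableAt ℝ (P1fn a q p) z₂ :=
      (hP₁.differentiableOn one_ne_zero).differentiableAt (isOpen_ball.mem_nhds hz₂)
    have hPfun : Pfn α a q p = fun z => (1/α) * Real.log (1 + α * P1fn a q p z) :=
      funext fun z => by rw [Pfn, if_neg hα]
    have hPdiff : DifferentiableAt ℝ (Pfn α a q p) z₂ := by
      rw [hPfun]
      exact (((hP1diff.const_mul α).const_add 1).log hC').const_mul (1/α)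
    have hPe : HasDerivAt (fun θ => Pfn α a q p (e θ))
        ((fderiv ℝ (Pfn α a q p) z₂) (Complex.I * z₂)) 0 := by
      have hP' : HasFDerivAt (Pfn α a q p) (fderiv ℝ (Pfn α a q p) z₂) (e 0) := by
        rw [he0]; exact hPdiff.hasFDerivAt
      exact HasFDerivAt.comp_hasDerivAt 0 hP' hepath
    have hPval : (fderiv ℝ (Pfn α a q p) z₂) (Complex.I * z₂)
        = P1 * (A.re + Real.tan R * A.im) / C := hPe.unique hGP
    -- f in z
    have hRdiff : DifferentiableAt ℝ (Rfn a q) z₂ :=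
      (hR.differentiableOn one_ne_zero).differentiableAt (isOpen_ball.mem_nhds hz₂)
    set g : ℂ → ℝ := fun z => -(1/α) * (Real.log (Real.cos (Rfn a q z + α * t))
        - Real.log (Real.cos (Rfn a q z))) with hg_def
    have hcosball : ∀ z ∈ ball (0:ℂ) ε₀,
        0 < Real.cos (Rfn a q z + α * t) ∧ 0 < Real.cos (Rfn a q z) := by
      intro z hz
      have h1 := hRle z hz
      have h2 := abs_lt.mp hαt
      constructor
      · apply hcos
        calc |Rfn a q z + α * t| ≤ |Rfn a q z| + |α * t| := abs_add_le _ _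
          _ < 1.57 := by linarith [le_abs_self (α * t), abs_lt.mp hαt]
      · exact hcos _ (lt_of_le_of_lt h1 (by norm_num))
    have heqf : ∀ z ∈ ball (0:ℂ) ε₀, ffn α a q z t = g z := by
      intro z hz
      obtain ⟨hA1, hA2⟩ := hcosball z hz
      rw [ffn, if_neg hα, Real.log_abs, Real.log_div (ne_of_gt hA1) (ne_of_gt hA2), hg_def]
    have hgdiff : DifferentiableAt ℝ g z₂ := by
      have h1 : DifferentiableAt ℝ (fun z => Real.log (Real.cos (Rfn a q z + α * t))) z₂ :=
        ((hRdiff.add_const (α * t)).cos).log (by rw [← hRdef, ← hT1def]; exact hc1ne)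
      have h2 : DifferentiableAt ℝ (fun z => Real.log (Real.cos (Rfn a q z))) z₂ :=
        (hRdiff.cos).log (by rw [← hRdef]; exact hcRne)
      exact (h1.sub h2).const_mul _
    have hev : (fun z => ffn α a q z t) =ᶠ[nhds z₂] g :=
      Filter.eventuallyEq_of_mem (isOpen_ball.mem_nhds hz₂) heqf
    have hfdiff : DifferentiableAt ℝ (fun z => ffn α a q z t) z₂ :=
      hgdiff.congr_of_eventuallyEq hev
    have hfeq : fderiv ℝ (fun z => ffn α a q z t) z₂ = fderiv ℝ g z₂ := hev.fderiv_eq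
    have hGf : HasDerivAt (fun θ => g (e θ))
        ((1/α) * (Real.tan T1 - Real.tan R) * A.im) 0 := by
      have h1 : HasDerivAt (fun θ => Rfn a q (e θ) + α * t) A.im 0 := hGR.add_const _
      have hcos1 : HasDerivAt (fun θ => Real.cos (Rfn a q (e θ) + α * t))
          (-Real.sin T1 * A.im) 0 := by
        have h := h1.cos
        rwa [hRe0, ← hT1def] at h
      have hlog1 : HasDerivAt (fun θ => Real.log (Real.cos (Rfn a q (e θ) + α * t)))
          (-Real.sin T1 * A.im / Real.cos T1) 0 := by
        have h := hcos1.log (by rw [hRe0, ← hT1def]; exact hc1ne)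
        rwa [hRe0, ← hT1def] at h
      have hcos2 : HasDerivAt (fun θ => Real.cos (Rfn a q (e θ))) (-Real.sin R * A.im) 0 := by
        have h := hGR.cos
        rwa [hRe0] at h
      have hlog2 : HasDerivAt (fun θ => Real.log (Real.cos (Rfn a q (e θ))))
          (-Real.sin R * A.im / Real.cos R) 0 := by
        have h := hcos2.log (by rw [hRe0]; exact hcRne)
        rwa [hRe0] at h
      have h3 := (hlog1.sub hlog2).const_mul (-(1/α))
      refine h3.congr_deriv ?_
      rw [Real.tan_eq_sin_div_cos, Real.tan_eq_sin_div_cos]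
      field_simp
      ring
    have hge : HasDerivAt (fun θ => g (e θ)) ((fderiv ℝ g z₂) (Complex.I * z₂)) 0 := by
      have hg' : HasFDerivAt g (fderiv ℝ g z₂) (e 0) := by
        rw [he0]; exact hgdiff.hasFDerivAt
      exact HasFDerivAt.comp_hasDerivAt 0 hg' hepath
    have hfval : (fderiv ℝ (fun z => ffn α a q z t) z₂) (Complex.I * z₂)
        = (1/α) * (Real.tan T1 - Real.tan R) * A.im := by
      rw [hfeq]; exact hge.unique hGf
    -- the t-derivative of f
    have hdt : deriv (fun s => ffn α a q z₂ s) t = Real.tan T1 := by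
      have hopen : IsOpen {s : ℝ | |α * s| < 1/2} :=
        isOpen_lt (continuous_abs.comp (continuous_const.mul continuous_id)) continuous_const
      have hev2 : (fun s => ffn α a q z₂ s) =ᶠ[nhds t]
          (fun s => -(1/α) * (Real.log (Real.cos (R + α * s)) - Real.log (Real.cos R))) := by
        refine Filter.eventuallyEq_of_mem (hopen.mem_nhds hαt) ?_
        intro s hs
        have hs' : |α * s| < 1/2 := hs
        have hcs : 0 < Real.cos (R + α * s) := by
          apply hcos
          calc |R + α * s| ≤ |R| + |α * s| := abs_add_le _ _
            _ < 1.57 := by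
              linarith [le_abs_self (α * s), abs_le.mp hRz, hs']
        simp only []
        rw [ffn, if_neg hα, ← hRdef, Real.log_abs, Real.log_div (ne_of_gt hcs) hcRne]
      have hd2 : HasDerivAt (fun s => -(1/α) * (Real.log (Real.cos (R + α * s))
          - Real.log (Real.cos R))) (Real.tan T1) t := by
        have h1 : HasDerivAt (fun s : ℝ => R + α * s) α t := by
          simpa using ((hasDerivAt_id t).const_mul α).const_add R
        have h2 := (h1.cos.log (by rw [← hT1def]; exact hc1ne)).sub_const
          (Real.log (Real.cos R))
        have h3 := h2.const_mul (-(1/α))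
        refine h3.congr_deriv ?_
        rw [← hT1def, Real.tan_eq_sin_div_cos]
        field_simp
      rw [hev2.deriv_eq]
      exact hd2.deriv
    -- value of exp(α x) on M
    have hPz2 : Pfn α a q p z₂ = (1/α) * Real.log C := by rw [Pfn, if_neg hα]
    have hfz2 : ffn α a q z₂ t = -(1/α) * Real.log (Real.cos T1 / Real.cos R) := by
      rw [ffn, if_neg hα, Real.log_abs]
    have hEx : Real.exp (α * z₁.re) = Real.cos T1 / (C * Real.cos R) := by
      have hx : α * z₁.re = -Real.log C + Real.log (Real.cos T1 / Real.cos R) := by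
        have hzre : z₁.re = -(Pfn α a q p z₂ + ffn α a q z₂ t) := by linarith [hρ]
        rw [hzre, hPz2, hfz2]
        field_simp
        ring
      rw [hx, Real.exp_add, Real.exp_neg, Real.exp_log hC, Real.exp_log (by positivity)]
      field_simp
    -- component computations
    set τ := Real.tan T1 with hτdef
    set E := Complex.exp ((α:ℂ) * z₁) with hE_def
    have hEre : E.re = Real.exp (α * z₁.re) * Real.cos (α * t) := by
      rw [hE_def, Complex.exp_re]
      congr 1 <;> simp [Complex.mul_re, Complex.mul_im, ht_def]
    have hEim : E.im = Real.exp (α * z₁.re) * Real.sin (α * t) := by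
      rw [hE_def, Complex.exp_im]
      congr 1 <;> simp [Complex.mul_re, Complex.mul_im, ht_def]
    have hcc : Real.cos T1 * Real.cos (α * t) + Real.sin T1 * Real.sin (α * t) = Real.cos R := by
      have h := Real.cos_sub T1 (α * t)
      rw [show T1 - α * t = R by rw [hT1def]; ring] at h
      linarith
    have hss : Real.sin T1 * Real.cos (α * t) - Real.cos T1 * Real.sin (α * t) = Real.sin R := by
      have h := Real.sin_sub T1 (α * t)
      rw [show T1 - α * t = R by rw [hT1def]; ring] at h
      linarith
    have hkre : E.re + τ * E.im = 1 / C := by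
      have h : E.re + τ * E.im = (Real.cos T1 * Real.cos (α * t)
          + Real.sin T1 * Real.sin (α * t)) / (C * Real.cos R) := by
        rw [hEre, hEim, hEx, hτdef, Real.tan_eq_sin_div_cos]
        field_simp
      rw [h, hcc]
      field_simp
    have hkim : E.im - τ * E.re = -(Real.sin R / Real.cos R) / C := by
      have h : E.im - τ * E.re = -(Real.sin T1 * Real.cos (α * t)
          - Real.cos T1 * Real.sin (α * t)) / (C * Real.cos R) := by
        rw [hEre, hEim, hEx, hτdef, Real.tan_eq_sin_div_cos]
        field_simp
        ring
      rw [h, hss]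
      rw [neg_div, neg_div, div_div, mul_comm C (Real.cos R)]
    have hFre : (((E - 1)/(α:ℂ)) * A * ((1/2:ℂ) + ((τ:ℝ):ℂ)/(2*Complex.I))).re
        = ((E.re - 1 + τ * E.im) * A.re + (τ * E.re - E.im - τ) * A.im) / (2*α) := by
      have h0 : ((E - 1)/(α:ℂ)) * A * ((1/2:ℂ) + ((τ:ℝ):ℂ)/(2*Complex.I))
          = (((E - 1) * A)/(α:ℂ)) * ((1/2:ℂ) + ((τ:ℝ):ℂ)/(2*Complex.I)) := by
        ring
      rw [h0, re_half_tau _ _ _ hα]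
      have hre : ((E - 1) * A).re = (E.re - 1) * A.re - E.im * A.im := by
        simp [Complex.sub_re, Complex.sub_im, Complex.mul_re]
      have him : ((E - 1) * A).im = (E.re - 1) * A.im + E.im * A.re := by
        simp [Complex.sub_re, Complex.sub_im, Complex.mul_im]
      rw [hre, him]
      ring
    have h1 : E.re - 1 + τ * E.im = 1/C - 1 := by linarith [hkre]
    have h2 : τ * E.re - E.im - τ = Real.sin R / Real.cos R / C - τ := by
      have hk := hkim
      rw [neg_div] at hk
      linarith [hk]
    have hW1 := wirt_real (Pfn α a q p) z₂ hPdiff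
    have hW2 := wirt_real (fun z => ffn α a q z t) z₂ hfdiff
    rw [hdt]
    rw [show Complex.I * z₂ * (wirt (fun w => ((Pfn α a q p w : ℝ):ℂ)) z₂
        + wirt (fun w => ((ffn α a q w t : ℝ):ℂ)) z₂)
        = Complex.I * z₂ * wirt (fun w => ((Pfn α a q p w : ℝ):ℂ)) z₂
          + Complex.I * z₂ * wirt (fun w => ((ffn α a q w t : ℝ):ℂ)) z₂ from mul_add _ _ _]
    rw [Complex.add_re, Complex.add_re]
    rw [hW1, hW2, hPval, hfval]
    rw [hFre, h1, h2]
    rw [Real.tan_eq_sin_div_cos]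
    rw [hCdef]
    have hC2 : 1 + α * P1 ≠ 0 := by rw [← hCdef]; exact hC'
    field_simp
    ring
end

section
/- With the data of the construction of M(a,α,p,q), assume α = 0. Then the holomorphic vector field H^{a,0}(z₁,z₂) = z₁·a(z₂)·∂/∂z₁ + iz₂·∂/∂z₂ is tangent to M(a,0,p,q), i.e. Re[ z₁·a(z₂)·(1/2 + Q₀(z₂)/(2i)) + iz₂·(P₁_{z₂}(z₂) + (Im z₁)·Q₀_{z₂}(z₂)) ] = 0 for all (z₁,z₂) ∈ M(a,0,p,q). -/
open Complex Metric Set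

set_option maxHeartbeats 1000000

lemma wirt_re_aux {u : ℂ → ℝ} {L : ℂ →L[ℝ] ℝ} {z : ℂ} (h : HasFDerivAt u L z) :
    (Complex.I * z * wirt (fun w => ((u w : ℝ) : ℂ)) z).re = L (Complex.I * z) / 2 := by
  have hU : HasFDerivAt (fun w => ((u w : ℝ) : ℂ)) (Complex.ofRealCLM.comp L) z :=
    Complex.ofRealCLM.hasFDerivAt.comp z h
  have hf : fderiv ℝ (fun w => ((u w : ℝ) : ℂ)) z = Complex.ofRealCLM.comp L := hU.fderiv
  have hIz : Complex.I * z = (-z.im : ℝ) • (1 : ℂ) + (z.re : ℝ) • Complex.I := by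
    simp [Complex.ext_iff]
  rw [wirt, hf, hIz, map_add, map_smul, map_smul]
  simp only [ContinuousLinearMap.comp_apply, Complex.ofRealCLM_apply, smul_eq_mul]
  simp [Complex.ext_iff, Complex.div_re, Complex.normSq_apply, Complex.mul_re, Complex.mul_im]
  ring

lemma Tfn_eq (a : ℕ → ℂ) (z : ℂ) : Tfn a z = -Complex.I * Sfn a z := by
  rw [Tfn, Sfn, ← tsum_mul_left]
  congr 1; funext n
  rw [div_eq_mul_inv, mul_inv, Complex.inv_I, div_eq_mul_inv]
  ring

lemma series_deriv {ε₀ : ℝ} (hε₀ : 0 < ε₀) {a : ℕ → ℂ} (ha0 : a 0 = 0)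
    (hsum : ∀ z ∈ ball (0:ℂ) ε₀, Summable fun n : ℕ => a n * z ^ n)
    {z : ℂ} (hz : z ∈ ball (0:ℂ) ε₀) :
    ∃ S' : ℂ, HasDerivAt (Sfn a) S' z ∧ z * S' = Afn a z := by
  have habs : ‖z‖ < ε₀ := by simpa [mem_ball_zero_iff] using hz
  have h0 : (0:ℝ) ≤ ‖z‖ := norm_nonneg z
  obtain ⟨r', h1, h3'⟩ : ∃ r', ‖z‖ < r' ∧ r' < ε₀ :=
    ⟨(‖z‖ + ε₀)/2, by linarith, by linarith⟩
  obtain ⟨r, h2, h3⟩ : ∃ r, r' < r ∧ r < ε₀ := ⟨(r' + ε₀)/2, by linarith, by linarith⟩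
  have hr'pos : 0 < r' := lt_of_le_of_lt h0 h1
  have hrpos : 0 < r := lt_trans hr'pos h2
  have hs : Summable fun n => a n * (r:ℂ) ^ n := by
    apply hsum
    simp [mem_ball_zero_iff, Complex.norm_real, abs_of_pos hrpos]
    exact h3
  have hb : BddAbove (Set.range fun n => ‖a n * (r:ℂ) ^ n‖) := by
    have := (hs.tendsto_atTop_zero.norm)
    simpa using this.bddAbove_range
  obtain ⟨C, hC⟩ := hb
  have hC' : ∀ n, ‖a n * (r:ℂ)^n‖ ≤ C := fun n => hC (Set.mem_range_self n)
  have hC0 : 0 ≤ C := le_trans (norm_nonneg _) (hC' 0)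
  have hq : r' / r < 1 := (div_lt_one hrpos).2 h2
  have hqnn : (0:ℝ) ≤ r' / r := by positivity
  have hu : Summable fun n : ℕ => C * (r'/r)^n :=
    (summable_geometric_of_lt_one hqnn hq).mul_left C
  have hf : ∀ i : ℕ, DifferentiableOn ℂ (fun w : ℂ => a i / i * w ^ i) (ball 0 r') :=
    fun i => ((differentiable_pow i).const_mul _).differentiableOn
  have hF_le : ∀ (i : ℕ) (w : ℂ), w ∈ ball (0:ℂ) r' → ‖a i / i * w ^ i‖ ≤ C * (r'/r)^i := by
    intro i w hw
    have hwle : ‖w‖ ≤ r' := le_of_lt (by simpa [mem_ball_zero_iff] using hw)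
    rcases Nat.eq_zero_or_pos i with h | h
    · subst h; simp [ha0]; positivity
    · have h1i : (1:ℝ) ≤ (i:ℝ) := by exact_mod_cast h
      have step1 : ‖a i / (i:ℂ) * w ^ i‖ ≤ ‖a i‖ * r' ^ i := by
        rw [norm_mul, norm_div, norm_pow]
        have hni : ‖((i:ℕ):ℂ)‖ = (i:ℝ) := by simp
        rw [hni]
        have : ‖a i‖ / (i:ℝ) ≤ ‖a i‖ := by
          apply div_le_self (norm_nonneg _) h1i
        apply mul_le_mul this (pow_le_pow_left₀ (norm_nonneg w) hwle i) (by positivity) (norm_nonneg _)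
      have step2 : ‖a i‖ * r' ^ i = ‖a i * (r:ℂ)^i‖ * (r'/r)^i := by
        rw [norm_mul, norm_pow, Complex.norm_real, Real.norm_eq_abs, abs_of_pos hrpos, div_pow]
        field_simp
      have step3 : ‖a i * (r:ℂ)^i‖ * (r'/r)^i ≤ C * (r'/r)^i := by
        apply mul_le_mul_of_nonneg_right (hC' i) (by positivity)
      calc ‖a i / (i:ℂ) * w ^ i‖ ≤ ‖a i‖ * r' ^ i := step1
        _ = ‖a i * (r:ℂ)^i‖ * (r'/r)^i := step2
        _ ≤ C * (r'/r)^i := step3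
  have hz' : z ∈ ball (0:ℂ) r' := by simpa [mem_ball_zero_iff] using h1
  have hdiff : DifferentiableOn ℂ (fun w : ℂ => ∑' i : ℕ, a i / i * w ^ i) (ball 0 r') :=
    Complex.differentiableOn_tsum_of_summable_norm hu hf isOpen_ball hF_le
  have hSd : DifferentiableAt ℂ (Sfn a) z :=
    (hdiff z hz').differentiableAt (isOpen_ball.mem_nhds hz')
  refine ⟨deriv (Sfn a) z, hSd.hasDerivAt, ?_⟩
  have hsum' : HasSum (fun i : ℕ => deriv (fun w : ℂ => a i / i * w^i) z) (deriv (Sfn a) z) :=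
    Complex.hasSum_deriv_of_summable_norm hu hf isOpen_ball hF_le hz'
  have hder : (fun i : ℕ => deriv (fun w : ℂ => a i / i * w^i) z)
      = fun i : ℕ => a i / i * (i * z^(i-1)) := by
    funext i
    exact ((hasDerivAt_pow i z).const_mul (a i / i)).deriv
  rw [hder] at hsum'
  have hsum'' := hsum'.mul_left z
  have heq : (fun i : ℕ => z * (a i / i * (i * z ^ (i - 1)))) = fun i : ℕ => a i * z ^ i := by
    funext i
    rcases i with _ | m
    · simp [ha0]
    · have hm : ((m+1 : ℕ) : ℂ) ≠ 0 := Nat.cast_ne_zero.2 (Nat.succ_ne_zero m)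
      push_cast at hm ⊢
      field_simp
      ring
  rw [heq] at hsum''
  exact hsum''.tsum_eq.symm

-- circle curve lemma
lemma circle_deriv (z : ℂ) :
    HasDerivAt (fun θ : ℝ => Complex.exp (↑θ * Complex.I) * z) (Complex.I * z) 0 := by
  have h1 : HasDerivAt (fun w : ℂ => Complex.exp (w * Complex.I) * z)
      (Complex.exp ((((0:ℝ)):ℂ) * Complex.I) * (1 * Complex.I) * z) (((0:ℝ):ℂ)) :=
    (((hasDerivAt_id _).mul_const Complex.I).cexp).mul_const z
  have h3 := h1.comp_ofReal
  simpa using h3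

lemma fcomp_circle {g : ℂ → ℝ} {L : ℂ →L[ℝ] ℝ} {z : ℂ} (hg : HasFDerivAt g L z) :
    HasDerivAt (fun θ : ℝ => g (Complex.exp (↑θ * Complex.I) * z)) (L (Complex.I * z)) 0 := by
  have hg' : HasFDerivAt g L (Complex.exp ((↑(0:ℝ)) * Complex.I) * z) := by
    have h0 : Complex.exp ((↑(0:ℝ)) * Complex.I) * z = z := by simp
    rw [h0]; exact hg
  have := hg'.comp_hasDerivAt 0 (circle_deriv z)
  exact this
lemma cos_R_pos {a : ℕ → ℂ} {q : ℝ → ℝ} {z : ℂ} (h : |Rfn a q z| ≤ 1) :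
    0 < Real.cos (Rfn a q z) := by
  have hpi : (1:ℝ) < Real.pi / 2 := by nlinarith [Real.pi_gt_three]
  obtain ⟨hl, hr⟩ := abs_le.mp h
  exact Real.cos_pos_of_mem_Ioo ⟨by linarith, by linarith⟩


/-- For `α = 0`, the holomorphic vector field
`H^{a,0} = z₁ a(z₂) ∂/∂z₁ + i z₂ ∂/∂z₂` is tangent to `M(a,0,p,q)`:
`Re[ z₁ a(z₂)(1/2 + Q₀(z₂)/(2i)) + i z₂ ((P₁)_{z₂}(z₂) + (Im z₁)(Q₀)_{z₂}(z₂)) ] = 0`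
on `M(a,0,p,q) = {Re z₁ + P₁(z₂) + Q₀(z₂)·Im z₁ = 0}`. -/
theorem stmt7
    (ε₀ : ℝ) (hε₀ : 0 < ε₀)
    (a : ℕ → ℂ) (ha0 : a 0 = 0) (hane : ∃ n, a n ≠ 0)
    (hsum : ∀ z ∈ ball (0:ℂ) ε₀, Summable fun n : ℕ => a n * z ^ n)
    (q : ℝ → ℝ) (hq0 : q 0 = 0)
    (hR : ContDiffOn ℝ 1 (Rfn a q) (ball 0 ε₀))
    (hRle : ∀ z ∈ ball (0:ℂ) ε₀, |Rfn a q z| ≤ 1)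
    (p : ℝ → ℝ)
    (hP₁ : ContDiffOn ℝ 1 (P1fn a q p) (ball 0 ε₀)) :
    ∀ z₁ z₂ : ℂ, z₂ ∈ ball (0:ℂ) ε₀ →
      z₁.re + P1fn a q p z₂ + Q0fn a q z₂ * z₁.im = 0 →
      (z₁ * Afn a z₂ * ((1 / 2 : ℂ) + ((Q0fn a q z₂ : ℝ) : ℂ) / (2 * Complex.I)) +
        Complex.I * z₂ * (wirt (fun w => ((P1fn a q p w : ℝ) : ℂ)) z₂ +
          ((z₁.im : ℝ) : ℂ) * wirt (fun w => ((Q0fn a q w : ℝ) : ℂ)) z₂)).re = 0 := by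
  intro z₁ z₂ hz₂ hM
  by_cases hz0 : z₂ = 0
  · subst hz0
    have hA0 : Afn a 0 = 0 := by
      rw [Afn, tsum_eq_single 0]
      · simpa using ha0
      · intro n hn; simp [zero_pow hn]
    simp [hA0]
  -- main case
  obtain ⟨S', hS, hzS⟩ := series_deriv hε₀ ha0 hsum hz₂
  -- the fderiv of Sfn as an ℝ-linear map
  set MS : ℂ →L[ℝ] ℂ := ((1 : ℂ →L[ℂ] ℂ).smulRight S').restrictScalars ℝ with hMS
  have hSf : HasFDerivAt (Sfn a) MS z₂ := (hS.hasFDerivAt).restrictScalars ℝ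
  have hMSval : ∀ v : ℂ, MS v = v * S' := by
    intro v; simp [hMS]
  -- fderiv of real part of S
  set LRe : ℂ →L[ℝ] ℝ := Complex.reCLM.comp MS with hLRe
  have hRe : HasFDerivAt (fun w => (Sfn a w).re) LRe z₂ :=
    Complex.reCLM.hasFDerivAt.comp z₂ hSf
  have hLReval : LRe (Complex.I * z₂) = -(Afn a z₂).im := by
    simp only [hLRe, ContinuousLinearMap.comp_apply, Complex.reCLM_apply]
    rw [hMSval]
    rw [mul_assoc, hzS]
    simp
  -- fderiv of imaginary part of S
  set LIm : ℂ →L[ℝ] ℝ := Complex.imCLM.comp MS with hLIm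
  have hIm : HasFDerivAt (fun w => (Sfn a w).im) LIm z₂ :=
    Complex.imCLM.hasFDerivAt.comp z₂ hSf
  have hLImval : LIm (Complex.I * z₂) = (Afn a z₂).re := by
    simp only [hLIm, ContinuousLinearMap.comp_apply, Complex.imCLM_apply]
    rw [hMSval, mul_assoc, hzS]
    simp
  -- fderiv of R
  have hRdiff : DifferentiableAt ℝ (Rfn a q) z₂ :=
    ((hR.differentiableOn one_ne_zero) z₂ hz₂).differentiableAt (isOpen_ball.mem_nhds hz₂)
  set LR : ℂ →L[ℝ] ℝ := fderiv ℝ (Rfn a q) z₂ with hLRdef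
  have hRf : HasFDerivAt (Rfn a q) LR z₂ := hRdiff.hasFDerivAt
  -- radial constancy for q ∘ abs
  have hγ := circle_deriv z₂
  have hγ0 : Complex.exp ((↑(0:ℝ)) * Complex.I) * z₂ = z₂ := by simp
  have habscirc : ∀ θ : ℝ, ‖Complex.exp (↑θ * Complex.I) * z₂‖ = ‖z₂‖ := by
    intro θ; simp [Complex.norm_exp]
  have hLRval : LR (Complex.I * z₂) = (Afn a z₂).im := by
    have hqd : HasFDerivAt (fun w => Rfn a q w + (Sfn a w).re) (LR + LRe) z₂ := hRf.add hRe
    have hcomp : HasDerivAt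
        (fun θ : ℝ => Rfn a q (Complex.exp (↑θ * Complex.I) * z₂) +
          (Sfn a (Complex.exp (↑θ * Complex.I) * z₂)).re)
        ((LR + LRe) (Complex.I * z₂)) 0 := fcomp_circle hqd
    have hconst : (fun θ : ℝ => Rfn a q (Complex.exp (↑θ * Complex.I) * z₂) +
        (Sfn a (Complex.exp (↑θ * Complex.I) * z₂)).re)
        = fun _ : ℝ => q ‖z₂‖ := by
      funext θ
      simp only [Rfn]
      rw [sub_add_cancel, habscirc]
    rw [hconst] at hcomp
    have h0 : (LR + LRe) (Complex.I * z₂) = 0 := hcomp.unique (hasDerivAt_const 0 _)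
    simp only [ContinuousLinearMap.add_apply] at h0
    rw [hLReval] at h0
    linarith
  -- cos R positive
  have hcosz : 0 < Real.cos (Rfn a q z₂) := cos_R_pos (hRle z₂ hz₂)
  -- fderiv of Q0
  have hQf : HasFDerivAt (Q0fn a q) ((1 / Real.cos (Rfn a q z₂) ^ 2) • LR) z₂ := by
    have := (Real.hasDerivAt_tan hcosz.ne').comp_hasFDerivAt z₂ hRf
    exact this
  have hQval : ((1 / Real.cos (Rfn a q z₂) ^ 2) • LR) (Complex.I * z₂)
      = (1 + Q0fn a q z₂ ^ 2) * (Afn a z₂).im := by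
    rw [ContinuousLinearMap.smul_apply, hLRval]
    have htan : 1 / Real.cos (Rfn a q z₂) ^ 2 = 1 + Real.tan (Rfn a q z₂) ^ 2 := by
      rw [Real.tan_eq_sin_div_cos]
      have h2 := Real.sin_sq_add_cos_sq (Rfn a q z₂)
      field_simp
      linarith
    rw [htan]
    simp [Q0fn, smul_eq_mul]
  -- fderiv of P1
  have hPdiff : DifferentiableAt ℝ (P1fn a q p) z₂ :=
    ((hP₁.differentiableOn one_ne_zero) z₂ hz₂).differentiableAt (isOpen_ball.mem_nhds hz₂)
  set LP : ℂ →L[ℝ] ℝ := fderiv ℝ (P1fn a q p) z₂ with hLPdef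
  have hPf : HasFDerivAt (P1fn a q p) LP z₂ := hPdiff.hasFDerivAt
  have hP1pos : 0 < P1fn a q p z₂ := by
    rw [P1fn, if_neg hz0]; exact Real.exp_pos _
  -- log P1
  have hlogP : HasFDerivAt (fun w => Real.log (P1fn a q p w)) ((P1fn a q p z₂)⁻¹ • LP) z₂ := by
    have := (Real.hasDerivAt_log hP1pos.ne').comp_hasFDerivAt z₂ hPf
    exact this
  -- Re T = Im S
  have hTre : (fun w => (Tfn a w).re) = fun w => (Sfn a w).im := by
    funext w; rw [Tfn_eq]; simp [Complex.mul_re]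
  -- log cos R
  have hcosRf : HasFDerivAt (fun w => Real.cos (Rfn a q w))
      ((-Real.sin (Rfn a q z₂)) • LR) z₂ :=
    (Real.hasDerivAt_cos (Rfn a q z₂)).comp_hasFDerivAt z₂ hRf
  have hlogcos : HasFDerivAt (fun w => Real.log (Real.cos (Rfn a q w)))
      ((Real.cos (Rfn a q z₂))⁻¹ • ((-Real.sin (Rfn a q z₂)) • LR)) z₂ := by
    have := (Real.hasDerivAt_log hcosz.ne').comp_hasFDerivAt z₂ hcosRf
    exact this
  -- the radial function v
  have hvf : HasFDerivAt
      (fun w => Real.log (P1fn a q p w) - (Tfn a w).re + Real.log (Real.cos (Rfn a q w)))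
      (((P1fn a q p z₂)⁻¹ • LP - LIm) + (Real.cos (Rfn a q z₂))⁻¹ •
        ((-Real.sin (Rfn a q z₂)) • LR)) z₂ := by
    have hIm' : HasFDerivAt (fun w => (Tfn a w).re) LIm z₂ := by rw [hTre]; exact hIm
    exact (hlogP.sub hIm').add hlogcos
  have hLPval : LP (Complex.I * z₂)
      = P1fn a q p z₂ * ((Afn a z₂).re + Q0fn a q z₂ * (Afn a z₂).im) := by
    have hcomp : HasDerivAt
        (fun θ : ℝ => Real.log (P1fn a q p (Complex.exp (↑θ * Complex.I) * z₂)) -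
          (Tfn a (Complex.exp (↑θ * Complex.I) * z₂)).re +
          Real.log (Real.cos (Rfn a q (Complex.exp (↑θ * Complex.I) * z₂))))
        ((((P1fn a q p z₂)⁻¹ • LP - LIm) + (Real.cos (Rfn a q z₂))⁻¹ •
          ((-Real.sin (Rfn a q z₂)) • LR)) (Complex.I * z₂)) 0 := fcomp_circle hvf
    have hconst : (fun θ : ℝ => Real.log (P1fn a q p (Complex.exp (↑θ * Complex.I) * z₂)) -
          (Tfn a (Complex.exp (↑θ * Complex.I) * z₂)).re +
          Real.log (Real.cos (Rfn a q (Complex.exp (↑θ * Complex.I) * z₂))))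
        = fun _ : ℝ => p ‖z₂‖ := by
      funext θ
      have hwne : Complex.exp (↑θ * Complex.I) * z₂ ≠ 0 :=
        mul_ne_zero (Complex.exp_ne_zero _) hz0
      have hwball : Complex.exp (↑θ * Complex.I) * z₂ ∈ ball (0:ℂ) ε₀ := by
        rw [mem_ball_zero_iff]
        rw [habscirc]
        simpa [mem_ball_zero_iff] using hz₂
      have hcosw : 0 < Real.cos (Rfn a q (Complex.exp (↑θ * Complex.I) * z₂)) :=
        cos_R_pos (hRle _ hwball)
      rw [P1fn, if_neg hwne, Real.log_exp, abs_of_pos hcosw, habscirc]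
      ring
    rw [hconst] at hcomp
    have h0 := hcomp.unique (hasDerivAt_const 0 _)
    simp only [ContinuousLinearMap.add_apply, ContinuousLinearMap.sub_apply,
      ContinuousLinearMap.smul_apply, smul_eq_mul] at h0
    rw [hLRval, hLImval] at h0
    have hcne : Real.cos (Rfn a q z₂) ≠ 0 := hcosz.ne'
    have hPne : P1fn a q p z₂ ≠ 0 := hP1pos.ne'
    rw [Q0fn, Real.tan_eq_sin_div_cos]
    field_simp at h0 ⊢
    linear_combination h0
  -- assemble
  have key1 := wirt_re_aux hPf
  have key2 := wirt_re_aux hQf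
  have hsplit : z₁ * Afn a z₂ * ((1 / 2 : ℂ) + ((Q0fn a q z₂ : ℝ) : ℂ) / (2 * Complex.I)) +
        Complex.I * z₂ * (wirt (fun w => ((P1fn a q p w : ℝ) : ℂ)) z₂ +
          ((z₁.im : ℝ) : ℂ) * wirt (fun w => ((Q0fn a q w : ℝ) : ℂ)) z₂)
      = z₁ * Afn a z₂ * ((1 / 2 : ℂ) + ((Q0fn a q z₂ : ℝ) : ℂ) / (2 * Complex.I)) +
        Complex.I * z₂ * wirt (fun w => ((P1fn a q p w : ℝ) : ℂ)) z₂ +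
        ((z₁.im : ℝ) : ℂ) * (Complex.I * z₂ * wirt (fun w => ((Q0fn a q w : ℝ) : ℂ)) z₂) := by
    ring
  rw [hsplit, Complex.add_re, Complex.add_re, key1, Complex.re_ofReal_mul, key2,
    hLPval, hQval]
  -- now a real polynomial identity
  have hc : ((1 / 2 : ℂ) + ((Q0fn a q z₂ : ℝ) : ℂ) / (2 * Complex.I))
      = (1 - ((Q0fn a q z₂ : ℝ) : ℂ) * Complex.I) / 2 := by
    field_simp
    linear_combination ((Q0fn a q z₂ : ℝ) : ℂ) * Complex.I_sq
  rw [hc]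
  set x := z₁.re
  set y := z₁.im
  set P := P1fn a q p z₂
  set Q := Q0fn a q z₂
  set rA := (Afn a z₂).re
  set iA := (Afn a z₂).im
  have hre : (z₁ * Afn a z₂ * ((1 - ((Q : ℝ) : ℂ) * Complex.I) / 2)).re
      = (x * rA - y * iA) / 2 + Q * (x * iA + y * rA) / 2 := by
    simp [Complex.div_re, Complex.mul_re, Complex.mul_im, Complex.normSq_apply]
    ring
  rw [hre]
  linear_combination hM * (rA + Q * iA) / 2
end

section
/- With the data of the construction of M(a,α,p,q): the identity Re[ iz₂·(P₁)_{z₂}(z₂) − (1/2 + Q₀(z₂)/(2i))·a(z₂)·P₁(z₂) ] = 0 holds for all z₂ ∈ Δ_{ε₀}. -/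
open Complex Metric Set

private lemma hasDerivAt_re' {f : ℝ → ℂ} {c : ℂ} {x : ℝ} (h : HasDerivAt f c x) :
    HasDerivAt (fun t => (f t).re) c.re x := by
  have := (Complex.reCLM.hasFDerivAt.comp x h.hasFDerivAt).hasDerivAt
  simp at this
  exact this

private lemma hasDerivAt_im' {f : ℝ → ℂ} {c : ℂ} {x : ℝ} (h : HasDerivAt f c x) :
    HasDerivAt (fun t => (f t).im) c.im x := by
  have := (Complex.imCLM.hasFDerivAt.comp x h.hasFDerivAt).hasDerivAt
  simp at this
  exact this

private lemma hTS (a : ℕ → ℂ) (ha0 : a 0 = 0) (ζ : ℂ) :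
    Tfn a ζ = -Complex.I * Sfn a ζ := by
  unfold Tfn Sfn
  rw [← tsum_mul_left]
  congr 1
  funext n
  cases n with
  | zero => simp [ha0]
  | succ m =>
    rw [div_eq_mul_inv, div_eq_mul_inv, mul_inv, Complex.inv_I]
    ring

private lemma aux_deriv_S (ε₀ : ℝ)
    (a : ℕ → ℂ) (ha0 : a 0 = 0)
    (hsum : ∀ z ∈ ball (0:ℂ) ε₀, Summable fun n : ℕ => a n * z ^ n)
    (z : ℂ) (hz : z ∈ ball (0:ℂ) ε₀) (hz0 : z ≠ 0) :
    HasDerivAt (fun θ : ℝ => Sfn a (z * Complex.exp (θ * Complex.I)))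
      (Complex.I * Afn a z) 0 := by
  set r := ‖z‖ with hr
  have hrpos : 0 < r := norm_pos_iff.mpr hz0
  have hrlt : r < ε₀ := by simpa [Complex.dist_eq] using hz
  obtain ⟨ρ, hρ1, hρ2⟩ := exists_between hrlt
  have hρpos : 0 < ρ := lt_trans hrpos hρ1
  have hρball : ((ρ : ℝ) : ℂ) ∈ ball (0:ℂ) ε₀ := by
    simp [Complex.dist_eq, abs_of_pos hρpos, hρ2]
  have hsρ := hsum _ hρball
  have htend : Filter.Tendsto (fun n => ‖a n‖ * ρ ^ n) Filter.atTop (nhds 0) := by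
    have h0 := hsρ.tendsto_atTop_zero
    have h1 := (continuous_norm.tendsto (0:ℂ)).comp h0
    simp only [norm_zero] at h1
    have heq : ((fun x : ℂ => ‖x‖) ∘ fun n => a n * (ρ:ℂ) ^ n) = fun n => ‖a n‖ * ρ ^ n := by
      funext n
      simp only [Function.comp_apply]
      rw [norm_mul, norm_pow, Complex.norm_real, Real.norm_eq_abs, abs_of_pos hρpos]
    rwa [heq] at h1
  obtain ⟨C, hC⟩ := htend.bddAbove_range
  have hC' : ∀ n, ‖a n‖ * ρ ^ n ≤ C := fun n => hC (Set.mem_range_self n)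
  set u : ℕ → ℝ := fun n => ‖a n‖ * r ^ n with hu_def
  have hu : Summable u := by
    refine Summable.of_nonneg_of_le (fun n => ?_) (fun n => ?_)
      (((summable_geometric_of_lt_one (by positivity) (by
        rw [div_lt_one hρpos]; exact hρ1)).mul_left C) :
        Summable fun n => C * (r / ρ) ^ n)
    · rw [hu_def]; positivity
    · have hρn : (ρ:ℝ) ^ n ≠ 0 := by positivity
      have key : ρ ^ n * (r / ρ) ^ n = r ^ n := by
        rw [div_pow, ← mul_div_assoc, mul_div_cancel_left₀ _ hρn]
      have h1 : u n = (‖a n‖ * ρ ^ n) * (r / ρ) ^ n := by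
        simp only [hu_def]
        rw [mul_assoc, key]
      rw [h1]
      have h2 : (0:ℝ) ≤ (r / ρ) ^ n := by positivity
      exact mul_le_mul_of_nonneg_right (hC' n) h2
  set w : ℝ → ℂ := fun θ => z * Complex.exp (θ * Complex.I) with hw_def
  have hwabs : ∀ θ, ‖w θ‖ = r := by
    intro θ
    simp [hw_def, Complex.norm_exp, hr]
  have hw' : ∀ θ, HasDerivAt w (w θ * Complex.I) θ := by
    intro θ
    have h1 : HasDerivAt (fun θ : ℝ => (θ : ℂ)) 1 θ := by
      have := Complex.ofRealCLM.hasDerivAt (x := θ)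
      simp at this
      exact this
    have h2 := (h1.mul_const Complex.I).cexp
    have h3 := h2.const_mul z
    refine h3.congr_deriv ?_
    rw [hw_def]; ring
  have hf' : ∀ (n : ℕ) (θ : ℝ),
      HasDerivAt (fun θ => a n / (n:ℂ) * (w θ) ^ n) (Complex.I * (a n * (w θ) ^ n)) θ := by
    intro n θ
    have haux : (fun θ : ℝ => a n / (n:ℂ) * (w θ) ^ n)
        = fun θ : ℝ => (a n / (n:ℂ) * z ^ n) * Complex.exp ((n:ℂ) * ((θ:ℂ) * Complex.I)) := by
      funext s
      rw [hw_def]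
      simp only [mul_pow, ← Complex.exp_nat_mul]
      ring
    rw [haux]
    have h1 : HasDerivAt (fun θ : ℝ => (θ : ℂ)) 1 θ := by
      have := Complex.ofRealCLM.hasDerivAt (x := θ)
      simp at this
      exact this
    have h2 := (((h1.mul_const Complex.I).const_mul ((n:ℂ))).cexp).const_mul
      (a n / (n:ℂ) * z ^ n)
    refine h2.congr_deriv ?_
    have hwn : (w θ) ^ n = z ^ n * Complex.exp ((n:ℂ) * ((θ:ℂ) * Complex.I)) := by
      rw [hw_def]
      simp only [mul_pow, ← Complex.exp_nat_mul]
    rw [hwn]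
    cases n with
    | zero => simp [ha0]
    | succ m =>
      have hne : ((m:ℂ) + 1) ≠ 0 := by
        have h2 : ((m+1:ℕ):ℂ) ≠ 0 := Nat.cast_ne_zero.mpr m.succ_ne_zero
        exact_mod_cast h2
      push_cast
      field_simp
  have hbound : ∀ (n : ℕ) (θ : ℝ), ‖Complex.I * (a n * (w θ) ^ n)‖ ≤ u n := by
    intro n θ
    rw [norm_mul, norm_mul, Complex.norm_I, one_mul, norm_pow]
    simp only [hwabs]
    exact le_refl _
  have hf0 : Summable (fun n => a n / (n:ℂ) * (w 0) ^ n) := by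
    apply Summable.of_norm_bounded hu
    intro n
    rw [norm_mul, norm_pow]
    simp only [hwabs]
    cases n with
    | zero => simp [ha0, hu_def]
    | succ m =>
      apply mul_le_mul_of_nonneg_right _ (by positivity)
      rw [norm_div]
      have h1 : (1:ℝ) ≤ ‖(((m+1:ℕ)):ℂ)‖ := by
        rw [Complex.norm_natCast]
        exact_mod_cast Nat.succ_le_succ (Nat.zero_le m)
      exact div_le_self (by positivity) h1
  have hg0 := hasDerivAt_tsum hu hf' hbound hf0 0
  have hw0 : w 0 = z := by simp [hw_def]
  have hval : (∑' n : ℕ, Complex.I * (a n * (w 0) ^ n)) = Complex.I * Afn a z := by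
    rw [tsum_mul_left, hw0]; rfl
  rw [hval] at hg0
  exact hg0

/-- Identity (ii) of the construction of `M(a,α,p,q)`:
`Re[ i z₂ (P₁)_{z₂}(z₂) − (1/2 + Q₀(z₂)/(2i)) a(z₂) P₁(z₂) ] = 0` on `Δ_{ε₀}`. -/
theorem stmt10
    (ε₀ : ℝ) (hε₀ : 0 < ε₀)
    (a : ℕ → ℂ) (ha0 : a 0 = 0) (hane : ∃ n, a n ≠ 0)
    (hsum : ∀ z ∈ ball (0:ℂ) ε₀, Summable fun n : ℕ => a n * z ^ n)
    (q : ℝ → ℝ) (hq0 : q 0 = 0)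
    (hR : ContDiffOn ℝ 1 (Rfn a q) (ball 0 ε₀))
    (hRle : ∀ z ∈ ball (0:ℂ) ε₀, |Rfn a q z| ≤ 1)
    (p : ℝ → ℝ)
    (hP₁ : ContDiffOn ℝ 1 (P1fn a q p) (ball 0 ε₀)) :
    ∀ z ∈ ball (0:ℂ) ε₀,
      (Complex.I * z * wirt (fun w => ((P1fn a q p w : ℝ) : ℂ)) z -
        ((1 / 2 : ℂ) + ((Q0fn a q z : ℝ) : ℂ) / (2 * Complex.I)) * Afn a z *
          ((P1fn a q p z : ℝ) : ℂ)).re = 0 := by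
  intro z hz
  by_cases hz0 : z = 0
  · subst hz0
    have hA : Afn a 0 = 0 := by
      have hterm : ∀ n : ℕ, a n * (0:ℂ) ^ n = 0 := by
        intro n
        cases n with
        | zero => simp [ha0]
        | succ m => simp
      unfold Afn
      rw [tsum_congr hterm, tsum_zero]
    simp [hA]
  -- main case
  set A := Afn a z with hA_def
  set r := ‖z‖ with hr_def
  set t := Real.tan (Rfn a q z) with ht_def
  have he0 : z * Complex.exp (((0:ℝ):ℂ) * Complex.I) = z := by simp
  have habs : ∀ θ : ℝ, ‖z * Complex.exp ((θ:ℂ) * Complex.I)‖ = r := by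
    intro θ
    simp [Complex.norm_exp, hr_def]
  have hwne : ∀ θ : ℝ, z * Complex.exp ((θ:ℂ) * Complex.I) ≠ 0 :=
    fun θ => mul_ne_zero hz0 (Complex.exp_ne_zero _)
  have hg : HasDerivAt (fun θ : ℝ => Sfn a (z * Complex.exp (θ * Complex.I)))
      (Complex.I * A) 0 := aux_deriv_S ε₀ a ha0 hsum z hz hz0
  have hgre := hasDerivAt_re' hg
  have hgim := hasDerivAt_im' hg
  have hIAre : (Complex.I * A).re = -A.im := by simp
  have hIAim : (Complex.I * A).im = A.re := by simp
  rw [hIAre] at hgre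
  rw [hIAim] at hgim
  have hRbd := hRle z hz
  have hcos : 0 < Real.cos (Rfn a q z) := by
    rcases abs_le.mp hRbd with ⟨h1, h2⟩
    have hπ := Real.pi_gt_three
    exact Real.cos_pos_of_mem_Ioo ⟨by linarith, by linarith⟩
  have hRz : Rfn a q z = q r - (Sfn a z).re := rfl
  -- inner derivative
  have hinner : HasDerivAt
      (fun θ : ℝ => q r - (Sfn a (z * Complex.exp ((θ:ℂ) * Complex.I))).re) A.im 0 := by
    have h := hgre.const_sub (q r)
    rw [neg_neg] at h
    exact h
  have hcosd := hinner.cos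
  have hcos0ne : Real.cos (q r - (Sfn a (z * Complex.exp (((0:ℝ):ℂ) * Complex.I))).re) ≠ 0 := by
    rw [he0, ← hRz]
    exact ne_of_gt hcos
  have hlog := hcosd.log hcos0ne
  have hφ : HasDerivAt
      (fun θ : ℝ => p r + (Sfn a (z * Complex.exp ((θ:ℂ) * Complex.I))).im -
        Real.log (Real.cos (q r - (Sfn a (z * Complex.exp ((θ:ℂ) * Complex.I))).re)))
      (A.re + t * A.im) 0 := by
    have h1 := (hgim.const_add (p r)).sub hlog
    refine h1.congr_deriv ?_
    rw [he0, ← hRz, ht_def, Real.tan_eq_sin_div_cos]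
    field_simp
    ring
  have hφexp := hφ.exp
  -- identification with P1 along the circle
  have hP1w : (fun θ : ℝ => P1fn a q p (z * Complex.exp ((θ:ℂ) * Complex.I)))
      = fun θ : ℝ => Real.exp (p r + (Sfn a (z * Complex.exp ((θ:ℂ) * Complex.I))).im -
          Real.log (Real.cos (q r - (Sfn a (z * Complex.exp ((θ:ℂ) * Complex.I))).re))) := by
    funext θ
    unfold P1fn
    rw [if_neg (hwne θ)]
    have hT : (Tfn a (z * Complex.exp ((θ:ℂ) * Complex.I))).re
        = (Sfn a (z * Complex.exp ((θ:ℂ) * Complex.I))).im := by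
      rw [hTS a ha0]
      simp
    have hRw : Rfn a q (z * Complex.exp ((θ:ℂ) * Complex.I))
        = q r - (Sfn a (z * Complex.exp ((θ:ℂ) * Complex.I))).re := by
      unfold Rfn
      rw [habs θ]
    rw [hT, hRw, habs θ, Real.log_abs]
  have hhderiv : HasDerivAt (fun θ : ℝ => P1fn a q p (z * Complex.exp ((θ:ℂ) * Complex.I)))
      (P1fn a q p z * (A.re + t * A.im)) 0 := by
    rw [hP1w]
    refine hφexp.congr_deriv ?_
    have h0 := congrFun hP1w 0
    simp only [he0] at h0
    rw [he0, ← h0]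
  -- chain rule
  have hdiff : DifferentiableAt ℝ (P1fn a q p) z :=
    (hP₁.contDiffAt (isOpen_ball.mem_nhds hz)).differentiableAt one_ne_zero
  set L := fderiv ℝ (P1fn a q p) z with hL_def
  have hwd : HasDerivAt (fun θ : ℝ => z * Complex.exp ((θ:ℂ) * Complex.I)) (z * Complex.I) 0 := by
    have h1 : HasDerivAt (fun θ : ℝ => (θ : ℂ)) 1 0 := by
      have := Complex.ofRealCLM.hasDerivAt (x := (0:ℝ))
      simp at this
      exact this
    have h2 := ((h1.mul_const Complex.I).cexp).const_mul z
    refine h2.congr_deriv ?_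
    simp
  have hh2 : HasDerivAt (fun θ : ℝ => P1fn a q p (z * Complex.exp ((θ:ℂ) * Complex.I)))
      (L (z * Complex.I)) 0 := by
    have hdF : HasFDerivAt (P1fn a q p) L (z * Complex.exp (((0:ℝ):ℂ) * Complex.I)) := by
      rw [he0]; exact hdiff.hasFDerivAt
    have hcomp := (hdF.comp (0:ℝ) hwd.hasFDerivAt).hasDerivAt
    simp at hcomp
    exact hcomp
  have key : L (z * Complex.I) = P1fn a q p z * (A.re + t * A.im) := hh2.unique hhderiv
  have hLzI : L (z * Complex.I) = z.re * L Complex.I - z.im * L 1 := by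
    have hzi : z * Complex.I = z.re • Complex.I + (-z.im) • (1:ℂ) := by
      apply Complex.ext <;> simp
    rw [hzi, map_add, map_smul, map_smul]
    simp [smul_eq_mul]
    ring
  have hkey : z.re * L Complex.I - z.im * L 1 = P1fn a q p z * (A.re + t * A.im) := by
    rw [← hLzI]; exact key
  -- wirt of the coerced function
  have hfd : fderiv ℝ (fun w => ((P1fn a q p w : ℝ) : ℂ)) z = Complex.ofRealCLM.comp L := by
    exact (Complex.ofRealCLM.hasFDerivAt.comp z hdiff.hasFDerivAt).fderiv
  have hQ : Q0fn a q z = t := rfl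
  unfold wirt
  rw [hfd, hQ]
  simp only [ContinuousLinearMap.coe_comp', Function.comp_apply, Complex.ofRealCLM_apply]
  set d1 := L 1 with hd1
  set di := L Complex.I with hdi
  set P := P1fn a q p z with hP_def
  have hexpr : (Complex.I * z * ((((d1:ℝ):ℂ) - Complex.I * ((di:ℝ):ℂ)) / 2) -
      ((1/2 : ℂ) + ((t:ℝ):ℂ) / (2 * Complex.I)) * A * ((P:ℝ):ℂ)).re
      = (z.re * di - z.im * d1) / 2 - P * (A.re + t * A.im) / 2 := by
    have h2I : ((t:ℝ):ℂ) / (2 * Complex.I) = -((t:ℝ):ℂ) * Complex.I / 2 := by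
      rw [div_eq_div_iff (by simp [Complex.I_ne_zero] : (2 * Complex.I) ≠ 0)
        (two_ne_zero)]
      ring_nf
      rw [Complex.I_sq]
      ring
    rw [h2I]
    simp [Complex.div_re, Complex.mul_re, Complex.mul_im, Complex.add_re, Complex.add_im,
      Complex.sub_re, Complex.sub_im, Complex.normSq_apply, Complex.inv_I,
      Complex.neg_re, Complex.neg_im, Complex.ofReal_re, Complex.ofReal_im,
      Complex.I_re, Complex.I_im]
    ring
  rw [hexpr, hkey]
  ring
end

section
/- With the data of the construction of M(a,α,p,q) and α ≠ 0: the identity Re[ iz₂·P_{z₂}(z₂) + ((e^{−αP(z₂)} − 1)/α)·(1/2 + Q₀(z₂)/(2i))·a(z₂) ] = 0 holds for all z₂ ∈ Δ_{ε₀}. -/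
open Complex Metric Set

lemma wirt_re {u : ℂ → ℝ} {z : ℂ} {D : ℂ →L[ℝ] ℝ} (hu : HasFDerivAt u D z) :
    (Complex.I * z * wirt (fun w => ((u w : ℝ) : ℂ)) z).re = D (Complex.I * z) / 2 := by
  have hC : HasFDerivAt (fun w => ((u w : ℝ) : ℂ)) (Complex.ofRealCLM.comp D) z :=
    (Complex.ofRealCLM.hasFDerivAt).comp z hu
  have hIz : Complex.I * z = (-(z.im)) • (1 : ℂ) + z.re • Complex.I := by
    apply Complex.ext <;> simp
  rw [hIz, map_add, map_smul, map_smul]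
  simp only [wirt, hC.fderiv, ContinuousLinearMap.coe_comp', Function.comp_apply,
    Complex.ofRealCLM_apply, smul_eq_mul]
  set A := D 1
  set B := D Complex.I
  simp [Complex.mul_re, Complex.mul_im, Complex.div_re, Complex.normSq, Complex.real_smul]
  ring

lemma comp_curve {f : ℂ → ℂ} {s z : ℂ} (hf : HasDerivAt f s z) {γ : ℝ → ℂ} {v : ℂ} {t : ℝ}
    (hγ : HasDerivAt γ v t) (hzt : γ t = z) :
    HasDerivAt (fun θ => f (γ θ)) (s * v) t := by
  have hF : HasFDerivAt f ((ContinuousLinearMap.smulRight (1 : ℂ →L[ℂ] ℂ) s).restrictScalars ℝ)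
      (γ t) := by
    rw [hzt]; exact (hasDerivAt_iff_hasFDerivAt.1 hf).restrictScalars ℝ
  have := hF.comp_hasDerivAt t hγ
  simpa [mul_comm, smul_eq_mul, Function.comp_def] using this

lemma comp_curve_re {f : ℂ → ℂ} {s z : ℂ} (hf : HasDerivAt f s z) {γ : ℝ → ℂ} {v : ℂ} {t : ℝ}
    (hγ : HasDerivAt γ v t) (hzt : γ t = z) :
    HasDerivAt (fun θ => (f (γ θ)).re) (s * v).re t := by
  have h1 := comp_curve hf hγ hzt
  have := (Complex.reCLM.hasFDerivAt (x := f (γ t))).comp_hasDerivAt t h1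
  simpa [Function.comp_def] using this


lemma seriesDeriv {a : ℕ → ℂ} (ha0 : a 0 = 0) {ε₀ : ℝ}
    (hsum : ∀ z ∈ ball (0:ℂ) ε₀, Summable fun n : ℕ => a n * z ^ n)
    (κ : ℂ) (hκ : κ ≠ 0) {w : ℂ} (hw : w ∈ ball (0:ℂ) ε₀) :
    HasDerivAt (fun z : ℂ => ∑' n : ℕ, a n / (κ * (n : ℂ)) * z ^ n)
      ((∑' n : ℕ, a (n + 1) * w ^ n) / κ) w := by
  rw [mem_ball_zero_iff] at hw
  obtain ⟨r, hwr, hrε⟩ : ∃ r : ℝ, ‖w‖ < r ∧ r < ε₀ :=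
    ⟨(‖w‖ + ε₀) / 2, by linarith, by linarith⟩
  have hr0 : 0 < r := lt_of_le_of_lt (norm_nonneg w) hwr
  obtain ⟨r', hrr', hr'ε⟩ : ∃ r' : ℝ, r < r' ∧ r' < ε₀ :=
    ⟨(r + ε₀) / 2, by linarith, by linarith⟩
  have hr'0 : 0 < r' := lt_trans hr0 hrr'
  have hsum' : Summable fun n : ℕ => ‖a n‖ * r' ^ n := by
    have h1 : Summable fun n : ℕ => a n * ((r' : ℂ)) ^ n := by
      apply hsum
      rw [mem_ball_zero_iff]
      simpa [abs_of_pos hr'0] using hr'ε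
    have := summable_norm_iff.2 h1
    simpa [norm_mul, norm_pow, abs_of_pos hr'0] using this
  set C : ℝ := ∑' n : ℕ, ‖a n‖ * r' ^ n with hC
  have hC0 : 0 ≤ C := tsum_nonneg fun n => by positivity
  have hCle : ∀ n : ℕ, ‖a n‖ * r' ^ n ≤ C := fun n =>
    Summable.le_tsum hsum' n fun j _ => by positivity
  set u : ℕ → ℝ := fun n => C / (‖κ‖ * r) * (r / r') ^ n with hu
  have hκ0 : (0:ℝ) < ‖κ‖ := norm_pos_iff.2 hκ
  have hugeo : Summable u := by
    apply Summable.mul_left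
    exact summable_geometric_of_lt_one (by positivity) (by rw [div_lt_one hr'0]; exact hrr')
  set f : ℕ → ℂ → ℂ := fun n z => a n / (κ * (n : ℂ)) * z ^ n with hf
  set f' : ℕ → ℂ → ℂ := fun n z => a n / κ * z ^ (n - 1) with hf'
  have hfderiv : ∀ n : ℕ, ∀ x ∈ ball (0:ℂ) r, HasDerivAt (f n) (f' n x) x := by
    intro n x _
    match n with
    | 0 =>
      have : f 0 = fun _ : ℂ => (0:ℂ) := by funext z; simp [hf, ha0]
      rw [this]
      have : f' 0 x = 0 := by simp [hf', ha0]
      rw [this]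
      exact hasDerivAt_const x 0
    | (m + 1) =>
      have hm : ((m : ℂ) + 1) ≠ 0 := by
        intro h; exact Nat.cast_add_one_ne_zero (R := ℂ) m (by push_cast; exact_mod_cast h)
      have h := (hasDerivAt_pow (m + 1) x).const_mul (a (m + 1) / (κ * ((m + 1 : ℕ) : ℂ)))
      have hval : a (m + 1) / (κ * ((m + 1 : ℕ) : ℂ)) * (((m + 1 : ℕ) : ℂ) * x ^ (m + 1 - 1))
          = f' (m + 1) x := by
        simp only [hf', Nat.add_sub_cancel]
        push_cast
        field_simp
      rw [hval] at h
      exact h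
  have hfbound : ∀ n : ℕ, ∀ x ∈ ball (0:ℂ) r, ‖f' n x‖ ≤ u n := by
    intro n x hx
    rw [mem_ball_zero_iff] at hx
    match n with
    | 0 =>
      have h0 : f' 0 x = 0 := by simp [hf', ha0]
      rw [h0, norm_zero, hu]
      exact mul_nonneg (div_nonneg hC0 (mul_nonneg (norm_nonneg κ) hr0.le))
        (pow_nonneg (div_nonneg hr0.le hr'0.le) 0)
    | (m + 1) =>
      simp only [hf', Nat.add_sub_cancel, norm_mul, norm_div, norm_pow]
      have h1 : ‖x‖ ^ m ≤ r ^ m := pow_le_pow_left₀ (norm_nonneg x) (le_of_lt hx) m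
      have h2 : ‖a (m+1)‖ ≤ C / r' ^ (m+1) := by
        rw [le_div_iff₀ (by positivity)]
        exact hCle (m+1)
      calc ‖a (m+1)‖ / ‖κ‖ * ‖x‖ ^ m ≤ (C / r' ^ (m+1)) / ‖κ‖ * r ^ m := by
            apply mul_le_mul (by gcongr) h1 (by positivity) (by positivity)
        _ = u (m+1) := by
            simp only [hu]
            rw [div_pow, pow_succ]
            field_simp [hr0.ne', hr'0.ne', norm_ne_zero_iff.mpr hκ]
            ring
  have h0mem : (0:ℂ) ∈ ball (0:ℂ) r := mem_ball_self hr0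
  have hwmem : w ∈ ball (0:ℂ) r := by rwa [mem_ball_zero_iff]
  have hf0 : Summable fun n => f n 0 := by
    have : (fun n => f n (0:ℂ)) = fun _ => 0 := by
      funext n
      match n with
      | 0 => simp [hf, ha0]
      | (m+1) => simp [hf]
    rw [this]; exact summable_zero
  have hmain := hasDerivAt_tsum_of_isPreconnected hugeo isOpen_ball
    (convex_ball (0:ℂ) r).isPreconnected hfderiv hfbound h0mem hf0 hwmem
  have hsum'' : Summable fun n => f' n w :=
    Summable.of_norm_bounded hugeo fun n => hfbound n w hwmem
  have hshift : (∑' n : ℕ, f' n w) = (∑' n : ℕ, a (n + 1) * w ^ n) / κ := by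
    rw [Summable.tsum_eq_zero_add hsum'']
    simp only [hf', ha0, zero_div, zero_mul, zero_add, Nat.add_sub_cancel]
    rw [← tsum_div_const]
    congr 1
    funext n
    ring
  rw [← hshift]
  exact hmain

lemma Afn_shift {a : ℕ → ℂ} (ha0 : a 0 = 0) {ε₀ : ℝ}
    (hsum : ∀ z ∈ ball (0:ℂ) ε₀, Summable fun n : ℕ => a n * z ^ n)
    {w : ℂ} (hw : w ∈ ball (0:ℂ) ε₀) :
    (∑' n : ℕ, a n * w ^ n) = w * ∑' n : ℕ, a (n + 1) * w ^ n := by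
  rw [Summable.tsum_eq_zero_add (hsum w hw)]
  simp only [ha0, zero_mul, pow_zero, zero_add]
  rw [← tsum_mul_left]
  congr 1
  funext n
  ring

/-- Identity (iii) of the construction of `M(a,α,p,q)`, `α ≠ 0`:
`Re[ i z₂ P_{z₂}(z₂) + ((e^{−αP(z₂)} − 1)/α)(1/2 + Q₀(z₂)/(2i)) a(z₂) ] = 0` on `Δ_{ε₀}`. -/
theorem stmt11
    (ε₀ : ℝ) (hε₀ : 0 < ε₀) (α : ℝ) (hα : α ≠ 0)
    (a : ℕ → ℂ) (ha0 : a 0 = 0) (hane : ∃ n, a n ≠ 0)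
    (hsum : ∀ z ∈ ball (0:ℂ) ε₀, Summable fun n : ℕ => a n * z ^ n)
    (q : ℝ → ℝ) (hq0 : q 0 = 0)
    (hR : ContDiffOn ℝ 1 (Rfn a q) (ball 0 ε₀))
    (hRle : ∀ z ∈ ball (0:ℂ) ε₀, |Rfn a q z| ≤ 1)
    (p : ℝ → ℝ)
    (hP₁ : ContDiffOn ℝ 1 (P1fn a q p) (ball 0 ε₀))
    (hpos : ∀ z ∈ ball (0:ℂ) ε₀, 0 < 1 + α * P1fn a q p z) :
    ∀ z ∈ ball (0:ℂ) ε₀,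
      (Complex.I * z * wirt (fun w => ((Pfn α a q p w : ℝ) : ℂ)) z +
        ((Complex.exp (-(α : ℂ) * ((Pfn α a q p z : ℝ) : ℂ)) - 1) / (α : ℂ)) *
          ((1 / 2 : ℂ) + ((Q0fn a q z : ℝ) : ℂ) / (2 * Complex.I)) * Afn a z).re = 0 := by
  intro z hz
  by_cases hz0 : z = 0
  · subst hz0
    have hA0 : Afn a 0 = 0 := by
      have h : ∀ n : ℕ, a n * (0:ℂ) ^ n = 0 := by
        intro n
        match n with
        | 0 => simp [ha0]
        | m + 1 => simp
      rw [Afn, tsum_congr h, tsum_zero]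
    simp [hA0]
  -- main case
  · have hzb : ‖z‖ < ε₀ := by
      have := mem_ball_zero_iff.1 hz
      exact this
    -- series derivatives
    have hSd : HasDerivAt (Sfn a) (∑' n : ℕ, a (n + 1) * z ^ n) z := by
      have h := seriesDeriv ha0 hsum 1 one_ne_zero hz
      simp only [one_mul, div_one] at h
      exact h
    have hTd : HasDerivAt (Tfn a) ((∑' n : ℕ, a (n + 1) * z ^ n) / Complex.I) z :=
      seriesDeriv ha0 hsum Complex.I Complex.I_ne_zero hz
    set g : ℂ := ∑' n : ℕ, a (n + 1) * z ^ n with hgdef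
    have hzg : z * g = Afn a z := (Afn_shift ha0 hsum hz).symm
    -- the circular curve
    have h1 : HasDerivAt (fun θ : ℝ => (θ : ℂ)) 1 0 := by
      simpa using (hasDerivAt_id (0:ℝ)).ofReal_comp
    have h2 : HasDerivAt (fun θ : ℝ => (θ : ℂ) * Complex.I) Complex.I 0 := by
      simpa using h1.mul_const Complex.I
    have h3 : HasDerivAt (fun θ : ℝ => Complex.exp ((θ : ℂ) * Complex.I)) Complex.I 0 := by
      simpa using h2.cexp
    set γ : ℝ → ℂ := fun θ => z * Complex.exp ((θ : ℂ) * Complex.I) with hγdef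
    have hγ0 : γ 0 = z := by simp [hγdef]
    have hγd : HasDerivAt γ (z * Complex.I) 0 := by
      simpa using h3.const_mul z
    have hγabs : ∀ θ, ‖γ θ‖ = ‖z‖ := by
      intro θ
      simp [hγdef, map_mul, Complex.norm_exp]
    have hγne : ∀ θ, γ θ ≠ 0 := fun θ => mul_ne_zero hz0 (Complex.exp_ne_zero _)
    have hγmem : ∀ θ, γ θ ∈ ball (0:ℂ) ε₀ := by
      intro θ
      rw [mem_ball_zero_iff, hγabs]
      exact hzb
    -- derivatives of real parts along curve
    have hSre : HasDerivAt (fun θ => (Sfn a (γ θ)).re) (Complex.I * Afn a z).re 0 := by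
      have h := comp_curve_re hSd hγd hγ0
      have hval : g * (z * Complex.I) = Complex.I * Afn a z := by rw [← hzg]; ring
      rwa [hval] at h
    have hTre : HasDerivAt (fun θ => (Tfn a (γ θ)).re) (Afn a z).re 0 := by
      have h := comp_curve_re hTd hγd hγ0
      have hval : g / Complex.I * (z * Complex.I) = Afn a z := by
        rw [← hzg]
        field_simp
      rwa [hval] at h
    -- cosine positivity
    have hπ : (1:ℝ) < Real.pi / 2 := by have := Real.pi_gt_three; linarith
    have hcosγ : ∀ θ, 0 < Real.cos (Rfn a q (γ θ)) := by
      intro θ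
      obtain ⟨hl, hr'⟩ := abs_le.1 (hRle (γ θ) (hγmem θ))
      exact Real.cos_pos_of_mem_Ioo ⟨by linarith, by linarith⟩
    have hRγ : ∀ θ, Rfn a q (γ θ) = q (‖z‖) - (Sfn a (γ θ)).re := by
      intro θ
      rw [Rfn, hγabs]
    have hcos' : ∀ θ, 0 < Real.cos (q (‖z‖) - (Sfn a (γ θ)).re) := by
      intro θ
      have := hcosγ θ
      rwa [hRγ θ] at this
    -- P1 along the curve
    have hP1γ : ∀ θ, P1fn a q p (γ θ) =
        Real.exp (p (‖z‖) + (Tfn a (γ θ)).re -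
          Real.log (Real.cos (q (‖z‖) - (Sfn a (γ θ)).re))) := by
      intro θ
      rw [P1fn, if_neg (hγne θ), hγabs θ, abs_of_pos (hcosγ θ), hRγ θ]
    -- explicit formula for P
    have hPfeq : Pfn α a q p = fun w => (1/α) * Real.log (1 + α * P1fn a q p w) :=
      funext fun w => by simp [Pfn, hα]
    have hXpos : 0 < 1 + α * P1fn a q p z := hpos z hz
    -- derivative of P along curve
    have hc0 : Real.cos (q (‖z‖) - (Sfn a (γ 0)).re) ≠ 0 := (hcos' 0).ne'
    have h4 : HasDerivAt (fun θ => q (‖z‖) - (Sfn a (γ θ)).re)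
        (-(Complex.I * Afn a z).re) 0 := hSre.const_sub _
    have h5 := h4.cos
    have h6 := h5.log hc0
    have h7 := (hTre.sub h6).const_add (p (‖z‖))
    have h8 := h7.exp
    have h9 := (h8.const_mul α).const_add 1
    have hX0 : 1 + α * Real.exp (p (‖z‖) + (Tfn a (γ 0)).re -
        Real.log (Real.cos (q (‖z‖) - (Sfn a (γ 0)).re))) =
        1 + α * P1fn a q p z := by
      rw [← hP1γ 0, hγ0]
    have h9ne : 1 + α * Real.exp (p (‖z‖) + ((Tfn a (γ 0)).re -
        Real.log (Real.cos (q (‖z‖) - (Sfn a (γ 0)).re)))) ≠ 0 := by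
      rw [← add_sub_assoc, hX0]
      exact hXpos.ne'
    have h10 := h9.log h9ne
    have h11 := h10.const_mul (1/α)
    -- identify with P ∘ γ
    have heqfun : ∀ θ, Pfn α a q p (γ θ) = 1/α * Real.log (1 + α *
        Real.exp (p (‖z‖) + ((Tfn a (γ θ)).re -
          Real.log (Real.cos (q (‖z‖) - (Sfn a (γ θ)).re))))) := by
      intro θ
      simp only [hPfeq, hP1γ θ, add_sub_assoc]
    have hPc := h11.congr_of_eventuallyEq (Filter.Eventually.of_forall fun θ => heqfun θ)
    -- P differentiable at z
    have hP1diff : DifferentiableAt ℝ (P1fn a q p) z :=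
      (hP₁.differentiableOn one_ne_zero).differentiableAt (isOpen_ball.mem_nhds hz)
    have hPdiffAt : DifferentiableAt ℝ (Pfn α a q p) z := by
      rw [hPfeq]
      exact (((hP1diff.const_mul α).const_add 1).log hXpos.ne').const_mul (1/α)
    have hPF : HasFDerivAt (Pfn α a q p) (fderiv ℝ (Pfn α a q p) z) z := hPdiffAt.hasFDerivAt
    set D := fderiv ℝ (Pfn α a q p) z with hDdef
    have hPF' : HasFDerivAt (Pfn α a q p) D (γ 0) := by rwa [hγ0]
    have hcomp : HasDerivAt (fun θ => Pfn α a q p (γ θ)) (D (z * Complex.I)) 0 := by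
      have h := hPF'.comp_hasDerivAt 0 hγd
      simpa [Function.comp_def] using h
    have hkey := hcomp.unique hPc
    -- wirtinger part
    have hw := wirt_re hPF
    rw [Complex.add_re, hw, mul_comm Complex.I z, hkey]
    -- exponential value
    have hPz : Pfn α a q p z = (1/α) * Real.log (1 + α * P1fn a q p z) := by rw [hPfeq]
    have hexp : Complex.exp (-(α:ℂ) * ((Pfn α a q p z : ℝ) : ℂ)) =
        (((1 + α * P1fn a q p z)⁻¹ : ℝ) : ℂ) := by
      have hcast : (-(α:ℂ)) * ((Pfn α a q p z : ℝ) : ℂ) =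
          ((-(α * Pfn α a q p z) : ℝ) : ℂ) := by push_cast; ring
      rw [hcast, ← Complex.ofReal_exp]
      congr 1
      rw [hPz, show -(α * ((1/α) * Real.log (1 + α * P1fn a q p z))) =
          -Real.log (1 + α * P1fn a q p z) by field_simp,
        Real.exp_neg, Real.exp_log hXpos]
    rw [hexp]
    -- second term real part
    have hsec : (((((1 + α * P1fn a q p z)⁻¹ : ℝ) : ℂ) - 1) / (α:ℂ) *
        ((1/2 : ℂ) + ((Q0fn a q z : ℝ) : ℂ) / (2 * Complex.I)) * Afn a z).re =
        ((1 + α * P1fn a q p z)⁻¹ - 1)/α *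
          ((Afn a z).re/2 + Q0fn a q z * (Afn a z).im/2) := by
      have hc : (((((1 + α * P1fn a q p z)⁻¹:ℝ):ℂ) - 1)/(α:ℂ)) =
          ((((1 + α * P1fn a q p z)⁻¹ - 1)/α : ℝ) : ℂ) := by push_cast; ring
      have hd : (1/2:ℂ) + ((Q0fn a q z : ℝ):ℂ)/(2*Complex.I) =
          ((1:ℂ) - ((Q0fn a q z : ℝ):ℂ)*Complex.I)/2 := by
        field_simp
        ring_nf
        linear_combination (((Q0fn a q z : ℝ):ℂ)) * Complex.I_sq
      rw [hc, hd]
      simp [Complex.mul_re, Complex.mul_im, Complex.div_re, Complex.div_im, Complex.normSq]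
      field_simp [hα, hXpos.ne']
      ring
    rw [hsec]
    -- final algebra
    have hv1 : (Complex.I * Afn a z).re = -(Afn a z).im := by simp [Complex.mul_re]
    have hRz : q (‖z‖) - (Sfn a (γ 0)).re = Rfn a q z := by rw [hγ0]; rfl
    have htan : Q0fn a q z = Real.sin (Rfn a q z) / Real.cos (Rfn a q z) := by
      rw [Q0fn, Real.tan_eq_sin_div_cos]
    have hcz : Real.cos (Rfn a q z) ≠ 0 := by
      have := hcos' 0
      rw [hRz] at this
      exact this.ne'
    simp only [Pi.sub_apply]
    rw [hRz, hv1]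
    have hE0 : Real.exp (p (‖z‖) + ((Tfn a (γ 0)).re -
        Real.log (Real.cos (Rfn a q z)))) = P1fn a q p z := by
      rw [← add_sub_assoc, ← hRz, ← hP1γ 0, hγ0]
    rw [hE0, htan]
    field_simp
    ring
end

section
/- With the data of the construction of M(a,α,p,q): the identity (i + f_t(z₂,t))·exp(α(it − f(z₂,t))) = i + Q₀(z₂) holds for all z₂ ∈ Δ_{ε₀} and all t ∈ (−δ₀,δ₀), where f_t denotes ∂f/∂t. -/
open Complex Metric Set

lemma cos_pos_aux (x : ℝ) (hx : |x| ≤ 3/2) : 0 < Real.cos x := by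
  have hpi := Real.pi_gt_d6
  obtain ⟨h1, h2⟩ := abs_le.mp hx
  exact Real.cos_pos_of_mem_Ioo ⟨by nlinarith, by nlinarith⟩

lemma euler_aux (θ : ℂ) :
    Complex.I * Complex.cos θ + Complex.sin θ = Complex.I * Complex.exp (-θ * Complex.I) := by
  rw [Complex.exp_mul_I, Complex.cos_neg, Complex.sin_neg]
  linear_combination Complex.sin θ * Complex.I_sq

lemma key_trig (x y : ℝ) (hx : Real.cos x ≠ 0) (hxy : Real.cos (x + y) ≠ 0) :
    (Complex.I + (Real.tan (x + y) : ℂ)) *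
      (Complex.exp ((y : ℂ) * Complex.I) * ((Real.cos (x + y) / Real.cos x : ℝ) : ℂ))
    = Complex.I + (Real.tan x : ℂ) := by
  have hxy' : Complex.cos ((x : ℂ) + (y : ℂ)) ≠ 0 := by
    rw [← Complex.ofReal_add, ← Complex.ofReal_cos]; exact_mod_cast hxy
  have hx' : Complex.cos (x : ℂ) ≠ 0 := by
    rw [← Complex.ofReal_cos]; exact_mod_cast hx
  have key : (Complex.I * Complex.cos ((x : ℂ) + (y : ℂ)) + Complex.sin ((x : ℂ) + (y : ℂ))) *
      Complex.exp ((y : ℂ) * Complex.I)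
      = Complex.I * Complex.cos (x : ℂ) + Complex.sin (x : ℂ) := by
    rw [euler_aux ((x : ℂ) + (y : ℂ)), euler_aux (x : ℂ), mul_assoc, ← Complex.exp_add]
    ring_nf
  rw [Real.tan_eq_sin_div_cos, Real.tan_eq_sin_div_cos, Complex.ofReal_div,
    Complex.ofReal_div, Complex.ofReal_div]
  push_cast
  field_simp
  rw [mul_comm (y : ℂ) Complex.I] at key
  linear_combination key

/-- Identity (iv) of the construction of `M(a,α,p,q)`:
`(i + f_t(z₂,t)) · exp(α(it − f(z₂,t))) = i + Q₀(z₂)` for all `z₂ ∈ Δ_{ε₀}` and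
`t ∈ (−δ₀, δ₀)` (where `δ₀ = 1/(2|α|)` if `α ≠ 0` and `δ₀ = +∞` if `α = 0`). -/
theorem stmt12
    (ε₀ : ℝ) (hε₀ : 0 < ε₀) (α : ℝ)
    (a : ℕ → ℂ) (ha0 : a 0 = 0) (hane : ∃ n, a n ≠ 0)
    (hsum : ∀ z ∈ ball (0:ℂ) ε₀, Summable fun n : ℕ => a n * z ^ n)
    (q : ℝ → ℝ) (hq0 : q 0 = 0)
    (hR : ContDiffOn ℝ 1 (Rfn a q) (ball 0 ε₀))
    (hRle : ∀ z ∈ ball (0:ℂ) ε₀, |Rfn a q z| ≤ 1) :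
    ∀ z ∈ ball (0:ℂ) ε₀, ∀ t : ℝ, (α ≠ 0 → |t| < 1 / (2 * |α|)) →
      (Complex.I + ((deriv (fun s : ℝ => ffn α a q z s) t : ℝ) : ℂ)) *
        Complex.exp ((α : ℂ) * (Complex.I * (t : ℂ) - ((ffn α a q z t : ℝ) : ℂ)))
      = Complex.I + ((Q0fn a q z : ℝ) : ℂ) := by
  intro z hz t ht
  set R := Rfn a q z with hRdef
  by_cases hα : α = 0
  · subst hα
    have hd : deriv (fun s : ℝ => ffn 0 a q z s) t = Real.tan R := by
      have : (fun s : ℝ => ffn 0 a q z s) = fun s : ℝ => Real.tan R * s := by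
        funext s; simp [ffn, hRdef]
      rw [this]
      simpa using ((hasDerivAt_id t).const_mul (Real.tan R)).deriv
    rw [hd]
    simp [Q0fn, hRdef]
  · have hRz : |R| ≤ 1 := hRle z hz
    have hαt : |α * t| < 1/2 := by
      rw [abs_mul]
      have h1 := ht hα
      have hα' : 0 < |α| := abs_pos.mpr hα
      calc |α| * |t| < |α| * (1 / (2 * |α|)) := by
            exact mul_lt_mul_of_pos_left h1 hα'
        _ = 1/2 := by field_simp
    have hcosR : 0 < Real.cos R := cos_pos_aux R (by
      have : (1:ℝ) ≤ 3/2 := by norm_num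
      linarith)
    set θ := R + α * t with hθdef
    have hcosθ : 0 < Real.cos θ := cos_pos_aux θ (by
      calc |θ| ≤ |R| + |α * t| := abs_add_le _ _
        _ ≤ 3/2 := by linarith)
    have hff : (fun s : ℝ => ffn α a q z s)
        = fun s => -(1/α) * Real.log (Real.cos (R + α * s) / Real.cos R) := by
      funext s; simp [ffn, hα, Real.log_abs, hRdef]
    have h1 : HasDerivAt (fun s : ℝ => R + α * s) α t := by
      simpa using ((hasDerivAt_id t).const_mul α).const_add R
    have h2 : HasDerivAt (fun s : ℝ => Real.cos (R + α * s)) (-Real.sin θ * α) t :=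
      h1.cos
    have hne : Real.cos θ / Real.cos R ≠ 0 := div_ne_zero hcosθ.ne' hcosR.ne'
    have h5 := (((h2.div_const (Real.cos R)).log hne).const_mul (-(1/α)))
    have hderiv : deriv (fun s : ℝ => ffn α a q z s) t = Real.tan θ := by
      rw [hff, h5.deriv, Real.tan_eq_sin_div_cos, ← hθdef]
      field_simp
    have hft : ffn α a q z t = -(1/α) * Real.log (Real.cos θ / Real.cos R) := by
      have := congrFun hff t; simpa using this
    have hexp_arg : (α : ℂ) * (Complex.I * (t : ℂ) - ((ffn α a q z t : ℝ) : ℂ)) =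
        ((α * t : ℝ) : ℂ) * Complex.I + ((Real.log (Real.cos θ / Real.cos R) : ℝ) : ℂ) := by
      rw [hft]
      have hαc : (α : ℂ) ≠ 0 := Complex.ofReal_ne_zero.mpr hα
      push_cast
      field_simp
      ring
    rw [hderiv, hexp_arg, Complex.exp_add, ← Complex.ofReal_exp,
      Real.exp_log (div_pos hcosθ hcosR)]
    have hkey := key_trig R (α * t) hcosR.ne' hcosθ.ne'
    rw [← hθdef] at hkey
    simpa [Q0fn, ← hRdef] using hkey
end

section
/- With the data of the construction of M(a,α,p,q): the identity Re[ 2iα·z₂·f_{z₂}(z₂,t) + (f_t(z₂,t) − Q₀(z₂))·i·a(z₂) ] = 0 holds for all z₂ ∈ Δ_{ε₀} and all t ∈ (−δ₀,δ₀), where f_{z₂} is the Wirtinger derivative of f in z₂ and f_t = ∂f/∂t. -/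
open Complex Metric Set

lemma sfn_hasDerivAt (ε₀ : ℝ) (a : ℕ → ℂ) (ha0 : a 0 = 0)
    (hsum : ∀ z ∈ ball (0:ℂ) ε₀, Summable fun n : ℕ => a n * z ^ n)
    (z : ℂ) (hz : z ∈ ball (0:ℂ) ε₀) :
    ∃ S' : ℂ, HasDerivAt (Sfn a) S' z ∧ z * S' = Afn a z := by
  have hz' : ‖z‖ < ε₀ := by simpa [Metric.mem_ball] using hz
  have hε₀ : 0 < ε₀ := lt_of_le_of_lt (norm_nonneg z) hz'
  obtain ⟨r, hr0, hzr, hrε⟩ : ∃ r : ℝ, 0 < r ∧ ‖z‖ < r ∧ r < ε₀ :=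
    ⟨(‖z‖ + ε₀) / 2, by positivity, by linarith, by linarith⟩
  obtain ⟨r', hrr', hr'ε⟩ : ∃ r' : ℝ, r < r' ∧ r' < ε₀ :=
    ⟨(r + ε₀) / 2, by linarith, by linarith⟩
  have hr'0 : 0 < r' := lt_trans hr0 hrr'
  have hs' : Summable fun n : ℕ => a n * (r' : ℂ) ^ n := by
    apply hsum
    simp only [Metric.mem_ball, dist_zero_right]
    rwa [Complex.norm_real, Real.norm_eq_abs, abs_of_pos hr'0]
  obtain ⟨C, hC⟩ : ∃ C : ℝ, ∀ n, ‖a n‖ * r' ^ n ≤ C := by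
    obtain ⟨C, hC⟩ := (hs'.tendsto_atTop_zero.norm.bddAbove_range)
    refine ⟨C, fun n => ?_⟩
    have := hC ⟨n, rfl⟩
    simpa [norm_mul, norm_pow, Complex.norm_real, Real.norm_eq_abs, abs_of_pos hr'0] using this
  have hC0 : 0 ≤ C := le_trans (by positivity) (hC 0)
  set x : ℝ := r / r' with hx
  have hx0 : 0 < x := by positivity
  have hx1 : x < 1 := by rw [hx, div_lt_one hr'0]; exact hrr'
  clear_value x
  set u : ℕ → ℝ := fun n => (C / r') * x ^ (n - 1) with hu
  have hu_sum : Summable u := by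
    apply Summable.mul_left
    apply Summable.of_nonneg_of_le (fun n => by positivity)
      (fun n => ?_) ((summable_geometric_of_lt_one hx0.le hx1).mul_left x⁻¹)
    rcases n with _ | m
    · simpa using (one_le_inv_iff₀.mpr ⟨hx0, hx1.le⟩)
    · rw [Nat.succ_sub_one, show x⁻¹ * x ^ (m + 1) = x ^ m by field_simp [pow_succ]; ring]
  set g : ℕ → ℂ → ℂ := fun n w => a n / (n : ℂ) * w ^ n with hg
  set g' : ℕ → ℂ → ℂ := fun n w => a n / (n : ℂ) * ((n : ℂ) * w ^ (n - 1)) with hg'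
  have hgd : ∀ n w, HasDerivAt (g n) (g' n w) w := fun n w =>
    (hasDerivAt_pow n w).const_mul _
  have hmne : ∀ m : ℕ, ((m : ℂ) + 1) ≠ 0 := by
    intro m
    have := Nat.cast_ne_zero (R := ℂ).mpr (Nat.succ_ne_zero m)
    push_cast at this
    exact this
  have hbound : ∀ (n : ℕ) (y : ℂ), y ∈ ball (0:ℂ) r → ‖g' n y‖ ≤ u n := by
    intro n y hy
    have hyr : ‖y‖ < r := by simpa [Metric.mem_ball] using hy
    rcases n with _ | m
    · simp [hg', hu]; positivity
    · have h1 : g' (m+1) y = a (m+1) * y ^ m := by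
        simp only [hg', Nat.succ_sub_one, Nat.cast_succ]
        field_simp [hmne m]
      rw [h1, norm_mul, norm_pow, hu]
      have haC : ‖a (m+1)‖ ≤ C / r' ^ (m+1) := by
        rw [le_div_iff₀ (by positivity)]; exact hC (m+1)
      calc ‖a (m+1)‖ * ‖y‖ ^ m ≤ (C / r' ^ (m+1)) * r ^ m := by
            apply mul_le_mul haC (pow_le_pow_left₀ (norm_nonneg y) hyr.le m)
              (by positivity) (by positivity)
        _ = C / r' * x ^ (m + 1 - 1) := by
            rw [Nat.succ_sub_one, hx, div_pow, div_mul_div_comm, div_mul_eq_mul_div,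
              pow_succ']
  have hg0 : Summable fun n => g n 0 := by
    apply summable_of_ne_finset_zero (s := {0})
    intro n hn
    simp only [Finset.mem_singleton] at hn
    simp [hg, zero_pow hn]
  have key := hasDerivAt_tsum_of_isPreconnected hu_sum isOpen_ball
    (convex_ball (0:ℂ) r).isPreconnected (fun n y _ => hgd n y) hbound
    (by simpa [Metric.mem_ball] using hr0) hg0 (by simpa [Metric.mem_ball] using hzr)
  refine ⟨∑' n, g' n z, key, ?_⟩
  rw [Afn, ← tsum_mul_left]
  apply tsum_congr
  intro n
  rcases n with _ | m
  · simp [hg', ha0]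
  · simp only [hg', Nat.succ_sub_one, Nat.cast_succ]
    field_simp [hmne m]
    ring

lemma wirt_ofReal {g : ℂ → ℝ} {L : ℂ →L[ℝ] ℝ} {z : ℂ} (h : HasFDerivAt g L z) :
    wirt (fun w => ((g w : ℝ) : ℂ)) z
      = (((L 1 : ℝ) : ℂ) - Complex.I * ((L Complex.I : ℝ) : ℂ)) / 2 := by
  have h2 : HasFDerivAt (fun w => ((g w : ℝ) : ℂ)) (Complex.ofRealCLM.comp L) z :=
    Complex.ofRealCLM.hasFDerivAt.comp z h
  rw [wirt, h2.fderiv]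
  simp

lemma clm_eval (L : ℂ →L[ℝ] ℝ) (v : ℂ) :
    L v = v.re * L 1 + v.im * L Complex.I := by
  have hv : v = (v.re : ℝ) • (1:ℂ) + (v.im : ℝ) • Complex.I := by
    simp [Complex.real_smul, Complex.re_add_im]
  conv_lhs => rw [hv]
  rw [map_add, map_smul, map_smul, smul_eq_mul, smul_eq_mul]

/-- Identity (v) of the construction of `M(a,α,p,q)`:
`Re[ 2iα z₂ f_{z₂}(z₂,t) + (f_t(z₂,t) − Q₀(z₂)) i a(z₂) ] = 0` for all `z₂ ∈ Δ_{ε₀}` and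
`t ∈ (−δ₀, δ₀)` (where `δ₀ = 1/(2|α|)` if `α ≠ 0` and `δ₀ = +∞` if `α = 0`). -/
theorem stmt13
    (ε₀ : ℝ) (hε₀ : 0 < ε₀) (α : ℝ)
    (a : ℕ → ℂ) (ha0 : a 0 = 0) (hane : ∃ n, a n ≠ 0)
    (hsum : ∀ z ∈ ball (0:ℂ) ε₀, Summable fun n : ℕ => a n * z ^ n)
    (q : ℝ → ℝ) (hq0 : q 0 = 0)
    (hR : ContDiffOn ℝ 1 (Rfn a q) (ball 0 ε₀))
    (hRle : ∀ z ∈ ball (0:ℂ) ε₀, |Rfn a q z| ≤ 1) :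
    ∀ z ∈ ball (0:ℂ) ε₀, ∀ t : ℝ, (α ≠ 0 → |t| < 1 / (2 * |α|)) →
      (2 * Complex.I * (α : ℂ) * z * wirt (fun w => ((ffn α a q w t : ℝ) : ℂ)) z +
        ((deriv (fun s : ℝ => ffn α a q z s) t - Q0fn a q z : ℝ) : ℂ) *
          Complex.I * Afn a z).re = 0 := by
  intro z hz t ht
  by_cases hα : α = 0
  · subst hα
    have hd : deriv (fun s : ℝ => ffn 0 a q z s) t = Real.tan (Rfn a q z) := by
      have : (fun s : ℝ => ffn 0 a q z s) = fun s => Real.tan (Rfn a q z) * s := by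
        funext s; simp [ffn]
      rw [this]
      simpa using ((hasDerivAt_id t).const_mul (Real.tan (Rfn a q z))).deriv
    simp [hd, Q0fn]
  · -- general cosine positivity
    have hcos : ∀ x : ℝ, |x| ≤ 3/2 → 0 < Real.cos x := by
      intro x hx
      have hπ : (3:ℝ) < Real.pi := Real.pi_gt_three
      rw [abs_le] at hx
      apply Real.cos_pos_of_mem_Ioo
      constructor <;> [linarith; linarith]
    have hαt : |α * t| < 1/2 := by
      rw [abs_mul]
      calc |α| * |t| < |α| * (1 / (2 * |α|)) :=
            mul_lt_mul_of_pos_left (ht hα) (abs_pos.mpr hα)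
        _ = 1/2 := by field_simp [abs_ne_zero.mpr hα]
    have hcos1 : ∀ w ∈ ball (0:ℂ) ε₀, 0 < Real.cos (Rfn a q w) := fun w hw =>
      hcos _ (le_trans (hRle w hw) (by norm_num))
    have hcos2 : ∀ w ∈ ball (0:ℂ) ε₀, ∀ s : ℝ, |α * s| < 1/2 →
        0 < Real.cos (Rfn a q w + α * s) := by
      intro w hw s hs
      apply hcos
      calc |Rfn a q w + α * s| ≤ |Rfn a q w| + |α * s| := abs_add_le _ _
        _ ≤ 3/2 := by have := hRle w hw; linarith
    have hf_eq : ∀ w ∈ ball (0:ℂ) ε₀, ∀ s : ℝ, |α * s| < 1/2 →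
        ffn α a q w s = -(1/α) *
          (Real.log (Real.cos (Rfn a q w + α * s)) - Real.log (Real.cos (Rfn a q w))) := by
      intro w hw s hs
      rw [ffn, if_neg hα, Real.log_abs,
        Real.log_div (ne_of_gt (hcos2 w hw s hs)) (ne_of_gt (hcos1 w hw))]
    -- differentiability data
    have hRd : DifferentiableAt ℝ (Rfn a q) z :=
      (hR.differentiableOn one_ne_zero).differentiableAt (isOpen_ball.mem_nhds hz)
    set L : ℂ →L[ℝ] ℝ := fderiv ℝ (Rfn a q) z with hLdef
    have hL : HasFDerivAt (Rfn a q) L z := hRd.hasFDerivAt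
    clear_value L
    obtain ⟨S', hS', hzS'⟩ := sfn_hasDerivAt ε₀ a ha0 hsum z hz
    set A := Real.tan (Rfn a q z + α * t) with hA
    set B := Real.tan (Rfn a q z) with hB
    set c : ℝ := (A - B) / α with hc
    -- Wirtinger derivative of f(·, t)
    have hG : HasDerivAt (fun r : ℝ => -(1/α) *
        (Real.log (Real.cos (r + α * t)) - Real.log (Real.cos r))) c (Rfn a q z) := by
      have h1 : HasDerivAt (fun r : ℝ => r + α * t) 1 (Rfn a q z) :=
        (hasDerivAt_id _).add_const _
      have h3 := (h1.cos.log (ne_of_gt (hcos2 z hz t hαt)))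
      have h4 := (Real.hasDerivAt_cos (Rfn a q z)).log (ne_of_gt (hcos1 z hz))
      have h5 := (h3.sub h4).const_mul (-(1/α))
      refine h5.congr_deriv ?_
      rw [hc, hA, hB, Real.tan_eq_sin_div_cos, Real.tan_eq_sin_div_cos]
      field_simp [ne_of_gt (hcos2 z hz t hαt), ne_of_gt (hcos1 z hz)]
      ring
    have hfz : HasFDerivAt (fun w => ffn α a q w t) (c • L) z := by
      apply (hG.comp_hasFDerivAt z hL).congr_of_eventuallyEq
      filter_upwards [isOpen_ball.mem_nhds hz] with w hw
      exact hf_eq w hw t hαt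
    have hw : wirt (fun w => ((ffn α a q w t : ℝ) : ℂ)) z
        = (((c * L 1 : ℝ) : ℂ) - Complex.I * ((c * L Complex.I : ℝ) : ℂ)) / 2 := by
      rw [wirt_ofReal hfz]
      simp [ContinuousLinearMap.smul_apply, smul_eq_mul]
    -- t-derivative
    have hdt : HasDerivAt (fun s => ffn α a q z s) A t := by
      have h1 : HasDerivAt (fun s : ℝ => Rfn a q z + α * s) α t := by
        simpa using ((hasDerivAt_id t).const_mul α).const_add (Rfn a q z)
      have h2 := ((h1.cos.log (ne_of_gt (hcos2 z hz t hαt))).sub_const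
        (Real.log (Real.cos (Rfn a q z)))).const_mul (-(1/α))
      have h3 : HasDerivAt (fun s => ffn α a q z s)
          (-(1/α) * (-Real.sin (Rfn a q z + α * t) * α / Real.cos (Rfn a q z + α * t))) t := by
        apply h2.congr_of_eventuallyEq
        have hopen : IsOpen {s : ℝ | |α * s| < 1/2} :=
          isOpen_lt (by continuity) continuous_const
        filter_upwards [hopen.mem_nhds hαt] with s hs
        exact hf_eq z hz s hs
      convert h3 using 1
      rw [hA, Real.tan_eq_sin_div_cos]
      field_simp [ne_of_gt (hcos2 z hz t hαt)]
    -- tangential condition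
    set LS : ℂ →L[ℝ] ℝ := Complex.reCLM.comp
      ((ContinuousLinearMap.smulRight (1 : ℂ →L[ℂ] ℂ) S').restrictScalars ℝ) with hLSdef
    have hLS : ∀ v : ℂ, LS v = (v * S').re := fun v => by
      simp [hLSdef, ContinuousLinearMap.smulRight_apply, smul_eq_mul]
    have hSd : HasFDerivAt (fun w => (Sfn a w).re) LS z :=
      Complex.reCLM.hasFDerivAt.comp z (hS'.hasFDerivAt.restrictScalars ℝ)
    clear_value LS
    have hQd : HasFDerivAt (fun w => q ‖w‖) (L + LS) z := by
      have heq : (fun w => q ‖w‖) = fun w => Rfn a q w + (Sfn a w).re := by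
        funext w; simp [Rfn]
      rw [heq]
      exact hL.add hSd
    have hγ : HasDerivAt (fun θ : ℝ => z * Complex.exp ((θ:ℂ) * Complex.I))
        (z * Complex.I) 0 := by
      have h1 : HasDerivAt (fun θ : ℝ => (θ:ℂ) * Complex.I) Complex.I 0 := by
        simpa using (Complex.ofRealCLM.hasDerivAt (x := (0:ℝ))).mul_const Complex.I
      simpa using (h1.cexp.const_mul z)
    have hγ0 : z * Complex.exp (((0:ℝ):ℂ) * Complex.I) = z := by simp
    have htang : (L + LS) (z * Complex.I) = 0 := by
      have hQd' : HasFDerivAt (fun w => q ‖w‖) (L + LS)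
          (z * Complex.exp (((0:ℝ):ℂ) * Complex.I)) := by rwa [hγ0]
      have hder := hQd'.comp_hasDerivAt 0 hγ
      have hconst : (fun θ : ℝ => q ‖z * Complex.exp ((θ:ℂ) * Complex.I)‖)
          = fun _ => q ‖z‖ := by
        funext θ
        congr 1
        rw [norm_mul, Complex.norm_exp]
        simp
      rw [show ((fun w => q ‖w‖) ∘ fun θ : ℝ => z * Complex.exp ((θ:ℂ) * Complex.I))
          = fun θ : ℝ => q ‖z * Complex.exp ((θ:ℂ) * Complex.I)‖ from rfl,
        hconst] at hder
      exact ((hasDerivAt_const (0:ℝ) (q ‖z‖)).unique hder).symm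
    have hkey : -z.im * (L 1) + z.re * (L Complex.I)
        - (z.re * S'.im + z.im * S'.re) = 0 := by
      have h1 := htang
      rw [clm_eval] at h1
      simp only [ContinuousLinearMap.add_apply, hLS] at h1
      simp only [Complex.mul_re, Complex.mul_im, Complex.I_re, Complex.I_im,
        Complex.one_re, Complex.one_im, one_mul, zero_mul, mul_zero, mul_one,
        sub_zero, zero_sub, add_zero, zero_add] at h1
      linear_combination h1
    -- final computation
    rw [hdt.deriv, hw, ← hzS']
    have hQ0 : Q0fn a q z = B := rfl
    rw [hQ0]
    have hexp : 2 * Complex.I * (α:ℝ) * z *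
          ((((c * L 1 : ℝ) : ℂ) - Complex.I * ((c * L Complex.I : ℝ) : ℂ)) / 2)
        = Complex.I * (α:ℝ) * z * ((c * L 1 : ℝ) : ℂ)
          + (α:ℝ) * z * ((c * L Complex.I : ℝ) : ℂ) := by
      linear_combination (-((α:ℝ) * z * ((c * L Complex.I : ℝ) : ℂ))) * Complex.I_sq
    rw [hexp, hc]
    have hdiv : α * ((A - B) / α) = A - B := by field_simp
    simp only [Complex.add_re, Complex.mul_re, Complex.mul_im, Complex.I_re, Complex.I_im,
      Complex.ofReal_re, Complex.ofReal_im]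
    linear_combination (A - B) * hkey + (-z.im * L 1 + z.re * L Complex.I) * hdiv
end
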